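/- arXiv:2007.03259 — 2 statements merged into one kernel-verified Lean document; each statement's English description precedes it below -/
import Mathlib

section
/- With 𝓐, A_a, A_b, B as in the limit problem: if λ belongs to exactly one of σ(A_a), σ(B), σ(A_b), then λ is an algebraically simple eigenvalue of 𝓐. Moreover its eigenvector is (u_λ, 0, 0) if λ ∈ σ(A_a), (0, 0, v_λ) if λ ∈ σ(A_b), and (T_a(λ)w_λ, w_λ, T_b(λ)w_λ) if λ ∈ σ(B), where T_a(λ)w_λ is the unique solution of −u''+qu = λru on (a,0) with ℓ_a u = 0 and u(0) = w_λ(−1), and similarly for T_b(λ)w_λ. -/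
open Set

def Reg2 (u : ℝ → ℂ) (s : Set ℝ) : Prop :=
  (∀ x ∈ s, DifferentiableAt ℝ u x) ∧ ∀ x ∈ s, DifferentiableAt ℝ (deriv u) x

/-- `u` is an eigenfunction of `A_a` for `λ`. -/
def EigfunAa (a α : ℝ) (q r : ℝ → ℝ) (lam : ℂ) (u : ℝ → ℂ) : Prop :=
  Reg2 u (Icc a 0) ∧
  (∀ x ∈ Icc a 0, -(deriv (deriv u) x) + (q x : ℂ) * u x = lam * (r x : ℂ) * u x) ∧
  u a * (Real.cos α : ℂ) + deriv u a * (Real.sin α : ℂ) = 0 ∧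
  u 0 = 0 ∧ ∃ x ∈ Icc a 0, u x ≠ 0

/-- `v` is an eigenfunction of `A_b` for `λ`. -/
def EigfunAb (b β : ℝ) (q r : ℝ → ℝ) (lam : ℂ) (v : ℝ → ℂ) : Prop :=
  Reg2 v (Icc 0 b) ∧
  (∀ x ∈ Icc 0 b, -(deriv (deriv v) x) + (q x : ℂ) * v x = lam * (r x : ℂ) * v x) ∧
  v 0 = 0 ∧
  v b * (Real.cos β : ℂ) + deriv v b * (Real.sin β : ℂ) = 0 ∧
  ∃ x ∈ Icc 0 b, v x ≠ 0

/-- `w` is an eigenfunction of the Neumann operator `B` for `λ`. -/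
def EigfunB (hh : ℝ → ℝ) (lam : ℂ) (w : ℝ → ℂ) : Prop :=
  Reg2 w (Icc (-1) 1) ∧
  (∀ t ∈ Icc (-1:ℝ) 1, -(deriv (deriv w) t) = lam * (hh t : ℂ) * w t) ∧
  deriv w (-1) = 0 ∧ deriv w 1 = 0 ∧ ∃ t ∈ Icc (-1:ℝ) 1, w t ≠ 0

def EigAa (a α : ℝ) (q r : ℝ → ℝ) (lam : ℂ) : Prop := ∃ u, EigfunAa a α q r lam u
def EigAb (b β : ℝ) (q r : ℝ → ℝ) (lam : ℂ) : Prop := ∃ v, EigfunAb b β q r lam v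
def EigB (hh : ℝ → ℝ) (lam : ℂ) : Prop := ∃ w, EigfunB hh lam w

/-- solution of `−u''+qu = λru` on `(a,0)` with `ℓ_a u = 0` and `u(0) = c`
(this is `T_a(λ)` applied to boundary data `c`). -/
def SolAa (a α : ℝ) (q r : ℝ → ℝ) (lam : ℂ) (c : ℂ) (u : ℝ → ℂ) : Prop :=
  Reg2 u (Icc a 0) ∧
  (∀ x ∈ Icc a 0, -(deriv (deriv u) x) + (q x : ℂ) * u x = lam * (r x : ℂ) * u x) ∧
  u a * (Real.cos α : ℂ) + deriv u a * (Real.sin α : ℂ) = 0 ∧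
  u 0 = c

/-- solution of `−v''+qv = λrv` on `(0,b)` with `v(0) = c` and `ℓ_b v = 0`
(this is `T_b(λ)` applied to boundary data `c`). -/
def SolAb (b β : ℝ) (q r : ℝ → ℝ) (lam : ℂ) (c : ℂ) (v : ℝ → ℂ) : Prop :=
  Reg2 v (Icc 0 b) ∧
  (∀ x ∈ Icc 0 b, -(deriv (deriv v) x) + (q x : ℂ) * v x = lam * (r x : ℂ) * v x) ∧
  v 0 = c ∧
  v b * (Real.cos β : ℂ) + deriv v b * (Real.sin β : ℂ) = 0

/-- `(u,w,v)` belongs to the domain of the block operator `𝓐`. -/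
def DomA (a b α β : ℝ) (u w v : ℝ → ℂ) : Prop :=
  Reg2 u (Icc a 0) ∧ Reg2 w (Icc (-1) 1) ∧ Reg2 v (Icc 0 b) ∧
  u a * (Real.cos α : ℂ) + deriv u a * (Real.sin α : ℂ) = 0 ∧
  deriv w (-1) = 0 ∧ deriv w 1 = 0 ∧
  v b * (Real.cos β : ℂ) + deriv v b * (Real.sin β : ℂ) = 0 ∧
  u 0 = w (-1) ∧ v 0 = w 1

/-- `(𝓐 − λ)(u,w,v) = (f,g,k)`, componentwise. -/
def MapA (a b : ℝ) (q r hh : ℝ → ℝ) (lam : ℂ) (u w v f g k : ℝ → ℂ) : Prop :=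
  (∀ x ∈ Icc a 0,
    -(deriv (deriv u) x) + (q x : ℂ) * u x - lam * (r x : ℂ) * u x = (r x : ℂ) * f x) ∧
  (∀ t ∈ Icc (-1:ℝ) 1,
    -(deriv (deriv w) t) - lam * (hh t : ℂ) * w t = (hh t : ℂ) * g t) ∧
  (∀ x ∈ Icc 0 b,
    -(deriv (deriv v) x) + (q x : ℂ) * v x - lam * (r x : ℂ) * v x = (r x : ℂ) * k x)

def ZeroF : ℝ → ℂ := fun _ => 0

def Nontriv (a b : ℝ) (u w v : ℝ → ℂ) : Prop :=
  (∃ x ∈ Icc a 0, u x ≠ 0) ∨ (∃ t ∈ Icc (-1:ℝ) 1, w t ≠ 0) ∨ (∃ x ∈ Icc 0 b, v x ≠ 0)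

/-- `(u,w,v)` is an eigenvector of `𝓐` corresponding to `λ`. -/
def EigvecA (a b α β : ℝ) (q r hh : ℝ → ℝ) (lam : ℂ) (u w v : ℝ → ℂ) : Prop :=
  DomA a b α β u w v ∧ MapA a b q r hh lam u w v ZeroF ZeroF ZeroF ∧ Nontriv a b u w v


open Complex

private lemma glue_deriv {F : ℝ → ℂ} {e : ℂ} {x : ℝ}
    (hl : HasDerivWithinAt F e (Iic x) x) (hr : HasDerivWithinAt F e (Ici x) x) :
    HasDerivAt F e x := by
  have h := hl.union hr
  rw [Iic_union_Ici] at h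
  rwa [hasDerivWithinAt_univ] at h

private lemma gronzero {f f' : ℝ → ℂ × ℂ} {c d K : ℝ}
    (hf : ∀ t ∈ Icc c d, HasDerivAt f (f' t) t)
    (hb : ∀ t ∈ Icc c d, ‖f' t‖ ≤ K * ‖f t‖)
    (h0 : f c = 0) : ∀ t ∈ Icc c d, f t = 0 := by
  intro t ht
  have hcont : ContinuousOn f (Icc c d) := fun x hx => (hf x hx).continuousAt.continuousWithinAt
  have key := norm_le_gronwallBound_of_norm_deriv_right_le (δ := 0) (K := K) (ε := 0) hcont
    (fun x hx => (hf x (Ico_subset_Icc_self hx)).hasDerivWithinAt)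
    (by simp [h0]) (fun x hx => by simpa using hb x (Ico_subset_Icc_self hx)) t ht
  rw [gronwallBound_ε0_δ0] at key
  simpa using le_antisymm key (norm_nonneg _)

private lemma gron_pair {c d M : ℝ} {U U₁ U₂ : ℝ → ℂ}
    (hb : ∀ t ∈ Icc c d, ‖U₂ t‖ ≤ M * ‖U t‖)
    (hU : ∀ t ∈ Icc c d, HasDerivAt U (U₁ t) t)
    (hU₁ : ∀ t ∈ Icc c d, HasDerivAt U₁ (U₂ t) t)
    (h0 : U c = 0) (h1 : U₁ c = 0) : ∀ t ∈ Icc c d, U t = 0 := by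
  have key : ∀ t ∈ Icc c d, (fun t => (U t, U₁ t)) t = 0 := by
    apply gronzero (f' := fun t => (U₁ t, U₂ t)) (K := max 1 M)
    · exact fun t ht => (hU t ht).prodMk (hU₁ t ht)
    · intro t ht
      have hK0 : (0:ℝ) ≤ max 1 M := le_trans zero_le_one (le_max_left 1 M)
      rw [Prod.norm_def, Prod.norm_def]
      apply max_le
      · calc ‖U₁ t‖ ≤ max ‖U t‖ ‖U₁ t‖ := le_max_right _ _
          _ = 1 * max ‖U t‖ ‖U₁ t‖ := (one_mul _).symm
          _ ≤ max 1 M * max ‖U t‖ ‖U₁ t‖ := by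
              apply mul_le_mul_of_nonneg_right (le_max_left 1 M)
              exact le_trans (norm_nonneg _) (le_max_left _ _)
      · calc ‖U₂ t‖ ≤ M * ‖U t‖ := hb t ht
          _ ≤ max 1 M * ‖U t‖ := mul_le_mul_of_nonneg_right (le_max_right 1 M) (norm_nonneg _)
          _ ≤ max 1 M * max ‖U t‖ ‖U₁ t‖ := mul_le_mul_of_nonneg_left (le_max_left _ _) hK0
    · simp [h0, h1, Prod.ext_iff]
  intro t ht
  have h := key t ht
  simp only [Prod.ext_iff, Prod.fst_zero, Prod.snd_zero] at h
  exact h.1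

private lemma ode_zero {c d M : ℝ} {P u u₁ : ℝ → ℂ}
    (hP : ∀ x ∈ Icc c d, ‖P x‖ ≤ M)
    (hu : ∀ x ∈ Icc c d, HasDerivAt u (u₁ x) x)
    (hu₁ : ∀ x ∈ Icc c d, HasDerivAt u₁ (P x * u x) x)
    {e : ℝ} (he : e ∈ Icc c d) (h0 : u e = 0) (h1 : u₁ e = 0) :
    ∀ x ∈ Icc c d, u x = 0 := by
  have hsub1 : Icc e d ⊆ Icc c d := Icc_subset_Icc he.1 le_rfl
  have hsub2 : Icc c e ⊆ Icc c d := Icc_subset_Icc le_rfl he.2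
  have hbd : ∀ x ∈ Icc c d, ‖P x * u x‖ ≤ M * ‖u x‖ := fun x hx => by
    rw [norm_mul]; exact mul_le_mul_of_nonneg_right (hP x hx) (norm_nonneg _)
  have fwd : ∀ x ∈ Icc e d, u x = 0 :=
    gron_pair (fun t ht => hbd t (hsub1 ht)) (fun t ht => hu t (hsub1 ht))
      (fun t ht => hu₁ t (hsub1 ht)) h0 h1
  have bwd : ∀ x ∈ Icc c e, u x = 0 := by
    have key : ∀ t ∈ Icc c e, u (c + e - t) = 0 := by
      apply gron_pair (M := M) (U₁ := fun t => -(u₁ (c + e - t)))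
        (U₂ := fun t => P (c + e - t) * u (c + e - t))
      · intro t ht
        have hm : c + e - t ∈ Icc c e := by constructor <;> [linarith [ht.2]; linarith [ht.1]]
        exact hbd _ (hsub2 hm)
      · intro t ht
        have hm : c + e - t ∈ Icc c e := by constructor <;> [linarith [ht.2]; linarith [ht.1]]
        have hinner : HasDerivAt (fun t : ℝ => c + e - t) (-1 : ℝ) t := by
          simpa using (hasDerivAt_id t).const_sub (c + e)
        have := (hu _ (hsub2 hm)).scomp t hinner
        exact this.congr_deriv (by simp)
      · intro t ht
        have hm : c + e - t ∈ Icc c e := by constructor <;> [linarith [ht.2]; linarith [ht.1]]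
        have hinner : HasDerivAt (fun t : ℝ => c + e - t) (-1 : ℝ) t := by
          simpa using (hasDerivAt_id t).const_sub (c + e)
        have h2 := (hu₁ _ (hsub2 hm)).scomp t hinner
        have h3 := h2.neg
        exact h3.congr_deriv (by simp)
      · simpa using h0
      · simpa using h1
    intro x hx
    have hm : c + e - x ∈ Icc c e := by constructor <;> [linarith [hx.2]; linarith [hx.1]]
    have := key _ hm
    simpa using this
  intro x hx
  rcases le_total x e with h | h
  · exact bwd x ⟨hx.1, h⟩
  · exact fwd x ⟨h, hx.2⟩

private lemma wronskian_bc {C S u0 u1 v0 v1 : ℂ} (hCS : C^2 + S^2 = 1)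
    (hu : u0*C + u1*S = 0) (hv : v0*C + v1*S = 0) : u0*v1 - u1*v0 = 0 := by
  calc u0*v1 - u1*v0 = (u0*v1-u1*v0)*(C^2+S^2) := by rw [hCS]; ring
  _ = (v1*(u0*C + u1*S) - u1*(v0*C + v1*S))*C + (u0*(v0*C + v1*S) - v0*(u0*C + u1*S))*S := by ring
  _ = 0 := by rw [hu, hv]; ring

private lemma lin_c {u0 u1 v0 v1 : ℂ} (hW : u0*v1 - u1*v0 = 0) (hv : ¬(v0 = 0 ∧ v1 = 0)) :
    ∃ cc, u0 = cc*v0 ∧ u1 = cc*v1 := by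
  by_cases h0 : v0 = 0
  · have h1 : v1 ≠ 0 := fun h => hv ⟨h0, h⟩
    refine ⟨u1/v1, ?_, by field_simp⟩
    have h2 : u0 * v1 = 0 := by rw [← hW, h0]; ring
    rcases mul_eq_zero.mp h2 with h | h
    · simp [h, h0]
    · exact absurd h h1
  · refine ⟨u0/v0, by field_simp, ?_⟩
    rw [div_mul_eq_mul_div, eq_div_iff h0]
    linear_combination -hW

private lemma flat {c d : ℝ} (hcd : c < d) {g ρ : ℝ → ℝ}
    (hg : ∀ x ∈ Icc c d, HasDerivAt g (ρ x) x)
    (hρ : ∀ x ∈ Icc c d, 0 ≤ ρ x)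
    (hend : g d ≤ g c) : ∀ x ∈ Ioo c d, ρ x = 0 := by
  have hmono : MonotoneOn g (Icc c d) := by
    apply monotoneOn_of_deriv_nonneg (convex_Icc c d)
    · exact fun x hx => (hg x hx).continuousAt.continuousWithinAt
    · rw [interior_Icc]
      exact fun x hx => ((hg x (Ioo_subset_Icc_self hx)).differentiableAt).differentiableWithinAt
    · rw [interior_Icc]
      intro x hx
      rw [(hg x (Ioo_subset_Icc_self hx)).deriv]
      exact hρ x (Ioo_subset_Icc_self hx)
  have hc : c ∈ Icc c d := ⟨le_rfl, hcd.le⟩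
  have hd : d ∈ Icc c d := ⟨hcd.le, le_rfl⟩
  have hconst : ∀ x ∈ Icc c d, g x = g c := fun x hx =>
    le_antisymm (le_trans (hmono hx hd hx.2) hend) (hmono hc hx hx.1)
  intro x hx
  have hev : g =ᶠ[nhds x] fun _ => g c :=
    Filter.eventuallyEq_of_mem (Ioo_mem_nhds hx.1 hx.2)
      (fun y hy => hconst y (Ioo_subset_Icc_self hy))
  have h1 : deriv g x = 0 := by rw [hev.deriv_eq]; exact deriv_const _ _
  rw [(hg x (Ioo_subset_Icc_self hx)).deriv] at h1
  exact h1

private lemma zero_endpoints {c d : ℝ} (hcd : c < d) {u : ℝ → ℂ}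
    (hc : ContinuousAt u c) (hd : ContinuousAt u d)
    (h : ∀ x ∈ Ioo c d, u x = 0) : ∀ x ∈ Icc c d, u x = 0 := by
  intro x hx
  rcases eq_or_lt_of_le hx.1 with heq | h1
  · subst heq
    have t1 : Filter.Tendsto u (nhdsWithin c (Ioi c)) (nhds (u c)) :=
      hc.continuousWithinAt.tendsto
    have hev : u =ᶠ[nhdsWithin c (Ioi c)] fun _ => 0 :=
      Filter.eventuallyEq_of_mem (Ioo_mem_nhdsGT_of_mem ⟨le_rfl, hcd⟩) h
    have t2 : Filter.Tendsto u (nhdsWithin c (Ioi c)) (nhds 0) :=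
      Filter.Tendsto.congr' hev.symm tendsto_const_nhds
    exact tendsto_nhds_unique t1 t2
  rcases eq_or_lt_of_le hx.2 with heq | h2
  · subst heq
    have t1 : Filter.Tendsto u (nhdsWithin x (Iio x)) (nhds (u x)) :=
      hd.continuousWithinAt.tendsto
    have hev : u =ᶠ[nhdsWithin x (Iio x)] fun _ => 0 :=
      Filter.eventuallyEq_of_mem (Ioo_mem_nhdsLT_of_mem ⟨hcd, le_rfl⟩) h
    have t2 : Filter.Tendsto u (nhdsWithin x (Iio x)) (nhds 0) :=
      Filter.Tendsto.congr' hev.symm tendsto_const_nhds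
    exact tendsto_nhds_unique t1 t2
  exact h x ⟨h1, h2⟩

private lemma ode_prop {c d M : ℝ} {P u u₁ v v₁ : ℝ → ℂ}
    (hP : ∀ x ∈ Icc c d, ‖P x‖ ≤ M)
    (hu : ∀ x ∈ Icc c d, HasDerivAt u (u₁ x) x)
    (hu₁ : ∀ x ∈ Icc c d, HasDerivAt u₁ (P x * u x) x)
    (hv : ∀ x ∈ Icc c d, HasDerivAt v (v₁ x) x)
    (hv₁ : ∀ x ∈ Icc c d, HasDerivAt v₁ (P x * v x) x)
    {e : ℝ} (he : e ∈ Icc c d)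
    (hW : u e * v₁ e - u₁ e * v e = 0)
    (hvnt : ∃ x ∈ Icc c d, v x ≠ 0) :
    ∃ cc, ∀ x ∈ Icc c d, u x = cc * v x := by
  have hv0 : ¬(v e = 0 ∧ v₁ e = 0) := by
    rintro ⟨h0, h1⟩
    obtain ⟨x0, hx0, hne⟩ := hvnt
    exact hne (ode_zero hP hv hv₁ he h0 h1 x0 hx0)
  obtain ⟨cc, hc0, hc1⟩ := lin_c hW hv0
  refine ⟨cc, fun x hx => ?_⟩
  have key : ∀ x ∈ Icc c d, (fun y => u y - cc * v y) x = 0 := by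
    apply ode_zero (P := P) (u₁ := fun y => u₁ y - cc * v₁ y) hP
    · exact fun y hy => (hu y hy).sub ((hv y hy).const_mul cc)
    · intro y hy
      have := (hu₁ y hy).sub ((hv₁ y hy).const_mul cc)
      refine this.congr_deriv (Eq.symm ?_)
      ring
    · exact he
    · simp [hc0]
    · simp [hc1]
  have := key x hx
  simp only [sub_eq_zero] at this
  exact this

private lemma glue_deriv' {F : ℝ → ℂ} {e : ℂ} {x : ℝ}
    (hl : HasDerivWithinAt F e (Iic x) x) (hr : HasDerivWithinAt F e (Ici x) x) :
    HasDerivAt F e x := by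
  have h := hl.union hr
  rw [Iic_union_Ici] at h
  rwa [hasDerivWithinAt_univ] at h

private lemma glue_left {c d : ℝ} (hcd : c < d) {F G H : ℝ → ℂ} {e : ℂ}
    (hFG : ∀ y ∈ Iic c, F y = G y) (hFH : ∀ y ∈ Icc c d, F y = H y)
    (hG : HasDerivAt G e c) (hH : HasDerivAt H e c) : HasDerivAt F e c := by
  apply glue_deriv'
  · exact (hG.hasDerivWithinAt).congr hFG (hFG c (mem_Iic.2 le_rfl))
  · refine (hH.hasDerivWithinAt).congr_of_eventuallyEq ?_ (hFH c ⟨le_rfl, hcd.le⟩)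
    have hmem : Icc c d ∈ nhdsWithin c (Ici c) :=
      mem_nhdsWithin.2 ⟨Iio d, isOpen_Iio, hcd, fun y hy => ⟨hy.2, hy.1.le⟩⟩
    exact Filter.eventuallyEq_of_mem hmem (fun y hy => hFH y hy)

private lemma glue_right {c d : ℝ} (hcd : c < d) {F G H : ℝ → ℂ} {e : ℂ}
    (hFG : ∀ y ∈ Ici d, F y = G y) (hFH : ∀ y ∈ Icc c d, F y = H y)
    (hG : HasDerivAt G e d) (hH : HasDerivAt H e d) : HasDerivAt F e d := by
  apply glue_deriv'
  · refine (hH.hasDerivWithinAt).congr_of_eventuallyEq ?_ (hFH d ⟨hcd.le, le_rfl⟩)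
    have hmem : Icc c d ∈ nhdsWithin d (Iic d) :=
      mem_nhdsWithin.2 ⟨Ioi c, isOpen_Ioi, hcd, fun y hy => ⟨hy.1.le, hy.2⟩⟩
    exact Filter.eventuallyEq_of_mem hmem (fun y hy => hFH y hy)
  · exact (hG.hasDerivWithinAt).congr hFG (hFG d (mem_Ici.2 le_rfl))

private noncomputable def polE (z z₁ z₂ : ℝ → ℂ) (e : ℝ) : ℝ → ℂ :=
  fun x => z e + (x - e) • z₁ e + ((x - e)^2 / 2) • z₂ e

private noncomputable def linE (z₁ z₂ : ℝ → ℂ) (e : ℝ) : ℝ → ℂ :=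
  fun x => z₁ e + (x - e) • z₂ e

private lemma polE_self (z z₁ z₂ : ℝ → ℂ) (e : ℝ) : polE z z₁ z₂ e e = z e := by
  simp [polE]

private lemma linE_self (z₁ z₂ : ℝ → ℂ) (e : ℝ) : linE z₁ z₂ e e = z₁ e := by
  simp [linE]

private lemma polE_deriv (z z₁ z₂ : ℝ → ℂ) (e x : ℝ) :
    HasDerivAt (polE z z₁ z₂ e) (linE z₁ z₂ e x) x := by
  have p1 : HasDerivAt (fun x : ℝ => x - e) 1 x := (hasDerivAt_id x).sub_const e
  have p2 : HasDerivAt (fun x : ℝ => (x - e) • z₁ e) ((1:ℝ) • z₁ e) x := p1.smul_const _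
  have p3 : HasDerivAt (fun x : ℝ => (x - e)^2 / 2) (x - e) x := by
    have h := (p1.pow 2).div_const 2
    refine h.congr_deriv (Eq.symm ?_)
    push_cast
    ring
  have p4 : HasDerivAt (fun x : ℝ => ((x - e)^2 / 2) • z₂ e) ((x - e) • z₂ e) x :=
    p3.smul_const _
  have h := ((hasDerivAt_const x (z e)).add p2).add p4
  have : (0 : ℂ) + (1:ℝ) • z₁ e + (x - e) • z₂ e = linE z₁ z₂ e x := by
    simp [linE]
  rw [this] at h
  exact h

private lemma linE_deriv (z₁ z₂ : ℝ → ℂ) (e x : ℝ) :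
    HasDerivAt (linE z₁ z₂ e) (z₂ e) x := by
  have p1 : HasDerivAt (fun x : ℝ => x - e) 1 x := (hasDerivAt_id x).sub_const e
  have p2 : HasDerivAt (fun x : ℝ => (x - e) • z₂ e) ((1:ℝ) • z₂ e) x := p1.smul_const _
  have h := (hasDerivAt_const x (z₁ e)).add p2
  have : (0 : ℂ) + (1:ℝ) • z₂ e = z₂ e := by simp
  rw [this] at h
  exact h

private lemma ext2 {c d : ℝ} (hcd : c < d) {z z₁ z₂ : ℝ → ℂ}
    (h0 : ∀ x ∈ Icc c d, HasDerivAt z (z₁ x) x)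
    (h1 : ∀ x ∈ Icc c d, HasDerivAt z₁ (z₂ x) x) :
    ∃ Z : ℝ → ℂ, (∀ x ∈ Icc c d, Z x = z x) ∧ Reg2 Z (Icc c d) ∧
      (∀ x ∈ Icc c d, deriv Z x = z₁ x) ∧ (∀ x ∈ Icc c d, deriv (deriv Z) x = z₂ x) := by
  classical
  set Z : ℝ → ℂ := fun x =>
    if x < c then polE z z₁ z₂ c x else if d < x then polE z z₁ z₂ d x else z x with hZdef
  set Q : ℝ → ℂ := fun x =>
    if x < c then linE z₁ z₂ c x else if d < x then linE z₁ z₂ d x else z₁ x with hQdef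
  have hZicc : ∀ x ∈ Icc c d, Z x = z x := fun x hx => by
    simp only [hZdef, if_neg (not_lt.2 hx.1), if_neg (not_lt.2 hx.2)]
  have hQicc : ∀ x ∈ Icc c d, Q x = z₁ x := fun x hx => by
    simp only [hQdef, if_neg (not_lt.2 hx.1), if_neg (not_lt.2 hx.2)]
  have hZleft : ∀ y ∈ Iic c, Z y = polE z z₁ z₂ c y := by
    intro y hy
    rcases lt_or_eq_of_le (mem_Iic.1 hy) with h | h
    · simp only [hZdef, if_pos h]
    · subst h
      rw [hZicc y ⟨le_rfl, hcd.le⟩, polE_self]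
  have hZright : ∀ y ∈ Ici d, Z y = polE z z₁ z₂ d y := by
    intro y hy
    rcases lt_or_eq_of_le (mem_Ici.1 hy) with h | h
    · simp only [hZdef, if_neg (not_lt.2 (le_trans hcd.le h.le)), if_pos h]
    · rw [← h, hZicc d ⟨hcd.le, le_rfl⟩, polE_self]
  have hQleft : ∀ y ∈ Iic c, Q y = linE z₁ z₂ c y := by
    intro y hy
    rcases lt_or_eq_of_le (mem_Iic.1 hy) with h | h
    · simp only [hQdef, if_pos h]
    · subst h
      rw [hQicc y ⟨le_rfl, hcd.le⟩, linE_self]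
  have hQright : ∀ y ∈ Ici d, Q y = linE z₁ z₂ d y := by
    intro y hy
    rcases lt_or_eq_of_le (mem_Ici.1 hy) with h | h
    · simp only [hQdef, if_neg (not_lt.2 (le_trans hcd.le h.le)), if_pos h]
    · rw [← h, hQicc d ⟨hcd.le, le_rfl⟩, linE_self]
  have hZD : ∀ x ∈ Icc c d, HasDerivAt Z (z₁ x) x := by
    intro x hx
    by_cases hx1 : x = c
    · subst hx1
      refine glue_left hcd hZleft hZicc ?_ (h0 x ⟨le_rfl, hcd.le⟩)
      have := polE_deriv z z₁ z₂ x x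
      rwa [linE_self] at this
    by_cases hx2 : x = d
    · subst hx2
      refine glue_right hcd hZright hZicc ?_ (h0 x ⟨hcd.le, le_rfl⟩)
      have := polE_deriv z z₁ z₂ x x
      rwa [linE_self] at this
    · have hlt1 : c < x := lt_of_le_of_ne hx.1 (Ne.symm hx1)
      have hlt2 : x < d := lt_of_le_of_ne hx.2 hx2
      refine (h0 x hx).congr_of_eventuallyEq ?_
      exact Filter.eventuallyEq_of_mem (Ioo_mem_nhds hlt1 hlt2)
        (fun y hy => hZicc y (Ioo_subset_Icc_self hy))
  have hQD : ∀ x ∈ Icc c d, HasDerivAt Q (z₂ x) x := by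
    intro x hx
    by_cases hx1 : x = c
    · subst hx1
      exact glue_left hcd hQleft hQicc (linE_deriv z₁ z₂ x x) (h1 x ⟨le_rfl, hcd.le⟩)
    by_cases hx2 : x = d
    · subst hx2
      exact glue_right hcd hQright hQicc (linE_deriv z₁ z₂ x x) (h1 x ⟨hcd.le, le_rfl⟩)
    · have hlt1 : c < x := lt_of_le_of_ne hx.1 (Ne.symm hx1)
      have hlt2 : x < d := lt_of_le_of_ne hx.2 hx2
      refine (h1 x hx).congr_of_eventuallyEq ?_
      exact Filter.eventuallyEq_of_mem (Ioo_mem_nhds hlt1 hlt2)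
        (fun y hy => hQicc y (Ioo_subset_Icc_self hy))
  have hderivZ : deriv Z = Q := by
    funext y
    by_cases hy1 : y < c
    · have hev : Z =ᶠ[nhds y] polE z z₁ z₂ c :=
        Filter.eventuallyEq_of_mem (Iio_mem_nhds hy1)
          (fun t ht => hZleft t (mem_Iic.2 (le_of_lt ht)))
      rw [hev.deriv_eq, (polE_deriv z z₁ z₂ c y).deriv]
      simp only [hQdef, if_pos hy1]
    by_cases hy2 : d < y
    · have hev : Z =ᶠ[nhds y] polE z z₁ z₂ d :=
        Filter.eventuallyEq_of_mem (Ioi_mem_nhds hy2)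
          (fun t ht => hZright t (mem_Ici.2 (le_of_lt ht)))
      rw [hev.deriv_eq, (polE_deriv z z₁ z₂ d y).deriv]
      simp only [hQdef, if_neg hy1, if_pos hy2]
    · have hy : y ∈ Icc c d := ⟨not_lt.1 hy1, not_lt.1 hy2⟩
      rw [(hZD y hy).deriv, (hQicc y hy)]
  refine ⟨Z, hZicc, ⟨fun x hx => (hZD x hx).differentiableAt, fun x hx => ?_⟩,
    fun x hx => (hZD x hx).deriv, fun x hx => ?_⟩
  · rw [hderivZ]
    exact (hQD x hx).differentiableAt
  · rw [hderivZ]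
    exact (hQD x hx).deriv

private lemma hasDerivAt_re {f : ℝ → ℂ} {f' : ℂ} {x : ℝ} (h : HasDerivAt f f' x) :
    HasDerivAt (fun y => (f y).re) f'.re x :=
  (Complex.reCLM.hasFDerivAt.comp_hasDerivAt x h :)

private lemma im_zero {c d : ℝ} (hcd : c < d) {lam : ℂ} {R : ℝ → ℝ} {P v v₁ : ℝ → ℂ}
    (hRpos : ∀ x, 0 < R x)
    (hPform : ∀ x ∈ Icc c d, P x - (starRingEnd ℂ) (P x) = ((starRingEnd ℂ) lam - lam) * (R x : ℂ))
    (hv : ∀ x ∈ Icc c d, HasDerivAt v (v₁ x) x)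
    (hv₁ : ∀ x ∈ Icc c d, HasDerivAt v₁ (P x * v x) x)
    (hnt : ∃ x ∈ Icc c d, v x ≠ 0)
    (hSc : v₁ c * (starRingEnd ℂ) (v c) - (starRingEnd ℂ) (v₁ c) * v c = 0)
    (hSd : v₁ d * (starRingEnd ℂ) (v d) - (starRingEnd ℂ) (v₁ d) * v d = 0) :
    lam.im = 0 := by
  by_contra him
  set S : ℝ → ℂ := fun x => v₁ x * (starRingEnd ℂ) (v x) - (starRingEnd ℂ) (v₁ x) * v x with hSdef
  have hSD : ∀ x ∈ Icc c d, HasDerivAt S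
      (((starRingEnd ℂ) lam - lam) * (R x : ℂ) * ((normSq (v x) : ℝ) : ℂ)) x := by
    intro x hx
    have hconjv : HasDerivAt (fun y => (starRingEnd ℂ) (v y)) ((starRingEnd ℂ) (v₁ x)) x :=
      (hv x hx).star
    have hconjv₁ : HasDerivAt (fun y => (starRingEnd ℂ) (v₁ y)) ((starRingEnd ℂ) (P x * v x)) x :=
      (hv₁ x hx).star
    have h := ((hv₁ x hx).mul hconjv).sub (hconjv₁.mul (hv x hx))
    refine h.congr_deriv (Eq.symm ?_)
    have h1 : ((R x : ℝ) : ℂ) * ((normSq (v x) : ℝ) : ℂ) = (R x : ℂ) * (v x * (starRingEnd ℂ) (v x)) := by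
      rw [Complex.mul_conj]
    have h2 := hPform x hx
    rw [map_mul]
    rw [mul_assoc, h1]
    linear_combination (-(v x * (starRingEnd ℂ) (v x))) * h2
  set T : ℝ → ℝ := fun x => (Complex.I * S x).re with hTdef
  have hval : ∀ x, (Complex.I * (((starRingEnd ℂ) lam - lam) * (R x : ℂ) *
      ((normSq (v x) : ℝ) : ℂ))).re = 2 * lam.im * (R x * normSq (v x)) := by
    intro x
    have h2 : (starRingEnd ℂ) lam - lam = -(((2 * lam.im : ℝ) : ℂ) * Complex.I) := by
      have := Complex.sub_conj lam
      linear_combination -this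
    rw [h2]
    have : Complex.I * (-(((2 * lam.im : ℝ) : ℂ) * Complex.I) * (R x : ℂ) * ((normSq (v x) : ℝ) : ℂ))
        = ((2 * lam.im * (R x * normSq (v x)) : ℝ) : ℂ) := by
      push_cast
      have hI := Complex.I_sq
      linear_combination (-(2 * (lam.im:ℂ)) * (R x : ℂ) * ((normSq (v x) : ℝ) : ℂ)) * hI
    rw [this]
    exact Complex.ofReal_re _
  have hTD : ∀ x ∈ Icc c d, HasDerivAt T (2 * lam.im * (R x * normSq (v x))) x := by
    intro x hx
    have := hasDerivAt_re ((hSD x hx).const_mul Complex.I)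
    rwa [hval x] at this
  have hTc : T c = 0 := by rw [hTdef]; simp only [hSdef] at hSc ⊢; rw [hSc]; simp
  have hTd : T d = 0 := by rw [hTdef]; simp only [hSdef] at hSd ⊢; rw [hSd]; simp
  have hvIoo : ∀ x ∈ Ioo c d, v x = 0 := by
    have key : ∀ x ∈ Ioo c d, 2 * lam.im * (R x * normSq (v x)) = 0 := by
      rcases le_or_gt 0 lam.im with h | h
      · apply flat hcd hTD
        · intro x hx
          have h1 := normSq_nonneg (v x)
          have h2 := (hRpos x).le
          have h3 := mul_nonneg h2 h1
          nlinarith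
        · rw [hTc, hTd]
      · have key2 := flat hcd (g := fun x => -T x) (ρ := fun x => -(2 * lam.im * (R x * normSq (v x))))
          (fun x hx => (hTD x hx).neg)
          (by
            intro x hx
            show 0 ≤ -(2 * lam.im * (R x * normSq (v x)))
            have h1 := normSq_nonneg (v x)
            have h2 := (hRpos x).le
            have h3 := mul_nonneg h2 h1
            nlinarith)
          (by show -T d ≤ -T c; rw [hTc, hTd])
        intro x hx
        have h5 : -(2 * lam.im * (R x * normSq (v x))) = 0 := key2 x hx
        linarith
    intro x hx
    have h1 := key x hx
    have h2 : lam.im ≠ 0 := him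
    have h3 : R x ≠ 0 := (hRpos x).ne'
    have h4 : normSq (v x) = 0 := by
      rcases mul_eq_zero.mp h1 with h | h
      · exfalso; rcases mul_eq_zero.mp h with h' | h' <;> [norm_num at h'; exact h2 h']
      · rcases mul_eq_zero.mp h with h' | h'
        · exact absurd h' h3
        · exact h'
    exact normSq_eq_zero.mp h4
  obtain ⟨x0, hx0, hne⟩ := hnt
  exact hne (zero_endpoints hcd
    (hv c ⟨le_rfl, hcd.le⟩).continuousAt (hv d ⟨hcd.le, le_rfl⟩).continuousAt hvIoo x0 hx0)

private lemma fredholm {c d M : ℝ} (hcd : c < d) {rr : ℝ → ℝ} {P v v₁ u u₁ : ℝ → ℂ}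
    (hrr : ∀ x, 0 < rr x)
    (hP : ∀ x ∈ Icc c d, ‖P x‖ ≤ M)
    (hPconj : ∀ x ∈ Icc c d, (starRingEnd ℂ) (P x) = P x)
    (hv : ∀ x ∈ Icc c d, HasDerivAt v (v₁ x) x)
    (hv₁ : ∀ x ∈ Icc c d, HasDerivAt v₁ (P x * v x) x)
    (hnt : ∃ x ∈ Icc c d, v x ≠ 0)
    {e : ℝ} (he : e ∈ Icc c d)
    (hWc : (starRingEnd ℂ) (v e) * v₁ e - (starRingEnd ℂ) (v₁ e) * v e = 0)
    (hu : ∀ x ∈ Icc c d, HasDerivAt u (u₁ x) x)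
    (hu₁ : ∀ x ∈ Icc c d, HasDerivAt u₁ (P x * u x - (rr x : ℂ) * v x) x)
    (hW1 : u₁ c * v c - u c * v₁ c = 0)
    (hW2 : u₁ d * v d - u d * v₁ d = 0) : False := by
  -- step 1 : conj v is proportional to v
  obtain ⟨μ, hμ⟩ : ∃ μ, ∀ x ∈ Icc c d, (starRingEnd ℂ) (v x) = μ * v x := by
    apply ode_prop (u := fun x => (starRingEnd ℂ) (v x)) (u₁ := fun x => (starRingEnd ℂ) (v₁ x))
      hP (fun x hx => (hv x hx).star)
      (fun x hx => by
        have h := (hv₁ x hx).star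
        have h2 : HasDerivAt (fun x => (starRingEnd ℂ) (v₁ x))
            ((starRingEnd ℂ) (P x) * (starRingEnd ℂ) (v x)) x := by
          simpa [RCLike.star_def, map_mul] using h
        rw [hPconj x hx] at h2
        exact h2)
      hv hv₁ he hWc hnt
  obtain ⟨x0, hx0, hne0⟩ := hnt
  have habs : ‖μ‖ = 1 := by
    have h1 := hμ x0 hx0
    have h2 : ‖(starRingEnd ℂ) (v x0)‖ = ‖v x0‖ := Complex.norm_conj _
    rw [h1, norm_mul] at h2
    have h3 : ‖v x0‖ ≠ 0 := by
      simpa using hne0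
    field_simp at h2
    exact h2
  have hμμ : (starRingEnd ℂ) μ * μ = 1 := by
    have := Complex.normSq_eq_norm_sq μ
    rw [habs] at this
    norm_num at this
    rw [← Complex.normSq_eq_conj_mul_self, this]
    norm_num
  -- step 2 : square root
  obtain ⟨ζ, hζ⟩ : ∃ ζ : ℂ, ζ ^ 2 = (starRingEnd ℂ) μ :=
    IsAlgClosed.exists_pow_nat_eq _ (by norm_num : 0 < 2)
  have hμ0 : μ ≠ 0 := by
    intro h
    rw [h] at habs
    norm_num at habs
  have hζ0 : ζ ≠ 0 := by
    intro h
    rw [h] at hζ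
    have : μ = 0 := by
      have := hζ.symm
      norm_num at this
      simpa using congrArg (starRingEnd ℂ) this
    exact hμ0 this
  have habsζ : ‖ζ‖ = 1 := by
    have h1 : ‖ζ‖^2 = ‖ζ^2‖ := by rw [norm_pow]
    rw [hζ, Complex.norm_conj, habs] at h1
    nlinarith [norm_nonneg ζ]
  have hconjζ : (starRingEnd ℂ) ζ * ζ = 1 := by
    have := Complex.normSq_eq_norm_sq ζ
    rw [habsζ] at this
    norm_num at this
    rw [← Complex.normSq_eq_conj_mul_self, this]
    norm_num
  -- step 3 : φ := ζ⁻¹ * v is real on Icc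
  have hre : ∀ x ∈ Icc c d, ((( ζ⁻¹ * v x).re : ℝ) : ℂ) = ζ⁻¹ * v x := by
    intro x hx
    rw [← Complex.conj_eq_iff_re]
    rw [map_mul, map_inv₀, hμ x hx]
    have hcz : (starRingEnd ℂ) ζ = ζ⁻¹ := by
      field_simp at hconjζ ⊢
      linear_combination hconjζ
    rw [hcz, inv_inv]
    -- goal : ζ * (μ * v x) = ζ⁻¹ * v x
    have hkey : ζ^2 * μ = 1 := by rw [hζ]; exact hμμ
    field_simp
    linear_combination (v x) * hkey
  -- step 4 : the Wronskian W = u₁ v - u v₁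
  set W : ℝ → ℂ := fun x => u₁ x * v x - u x * v₁ x with hWdef
  have hWD : ∀ x ∈ Icc c d, HasDerivAt W (-((rr x : ℂ)) * (v x)^2) x := by
    intro x hx
    have h := ((hu₁ x hx).mul (hv x hx)).sub ((hu x hx).mul (hv₁ x hx))
    refine h.congr_deriv (Eq.symm ?_)
    ring
  set T : ℝ → ℝ := fun x => ((starRingEnd ℂ) ζ ^ 2 * W x).re with hTdef
  have hval : ∀ x ∈ Icc c d, (starRingEnd ℂ) ζ ^ 2 * (-((rr x : ℂ)) * (v x)^2)
      = ((-(rr x * ((ζ⁻¹ * v x).re)^2) : ℝ) : ℂ) := by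
    intro x hx
    have h1 : ((( ζ⁻¹ * v x).re : ℝ) : ℂ) = ζ⁻¹ * v x := hre x hx
    have h2 : (v x)^2 = ζ^2 * (ζ⁻¹ * v x)^2 := by
      field_simp
    rw [h2]
    have h3 : (starRingEnd ℂ) ζ ^ 2 * (-((rr x : ℂ)) * (ζ^2 * (ζ⁻¹ * v x)^2))
        = ((starRingEnd ℂ) ζ * ζ)^2 * (-((rr x : ℂ)) * (ζ⁻¹ * v x)^2) := by ring
    rw [h3, hconjζ]
    rw [← h1]
    simp only [Complex.ofReal_re]
    push_cast
    ring
  have hTD : ∀ x ∈ Icc c d, HasDerivAt T (-(rr x * ((ζ⁻¹ * v x).re)^2)) x := by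
    intro x hx
    have := hasDerivAt_re ((hWD x hx).const_mul ((starRingEnd ℂ) ζ ^ 2))
    rw [hval x hx] at this
    rwa [Complex.ofReal_re] at this
  have hTc : T c = 0 := by
    have : W c = 0 := hW1
    simp only [hTdef, hWdef] at this ⊢
    rw [this]
    simp
  have hTd : T d = 0 := by
    have : W d = 0 := hW2
    simp only [hTdef, hWdef] at this ⊢
    rw [this]
    simp
  have key := flat hcd (g := fun x => -T x) (ρ := fun x => rr x * ((ζ⁻¹ * v x).re)^2)
    (fun x hx => by
      have h := (hTD x hx).neg
      exact h.congr_deriv (by ring))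
    (fun x hx => by
      have := (hrr x).le
      positivity)
    (by show -T d ≤ -T c; rw [hTc, hTd])
  have hvIoo : ∀ x ∈ Ioo c d, v x = 0 := by
    intro x hx
    have h1 := key x hx
    have h2 : ((ζ⁻¹ * v x).re)^2 = 0 := by
      rcases mul_eq_zero.mp h1 with h | h
      · exact absurd h (hrr x).ne'
      · exact h
    have h3 : (ζ⁻¹ * v x).re = 0 := by
      nlinarith
    have h4 : ζ⁻¹ * v x = 0 := by
      rw [← hre x (Ioo_subset_Icc_self hx), h3]
      norm_num
    rcases mul_eq_zero.mp h4 with h | h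
    · exact absurd h (inv_ne_zero hζ0)
    · exact h
  have := zero_endpoints hcd (hv c ⟨le_rfl, hcd.le⟩).continuousAt
    (hv d ⟨hcd.le, le_rfl⟩).continuousAt hvIoo x0 hx0
  exact hne0 this

/-- if `λ` belongs to exactly one of `σ(A_a)`, `σ(B)`, `σ(A_b)`, then `λ`
is an algebraically simple eigenvalue of `𝓐`, with eigenvector `(u_λ,0,0)`, resp.
`(T_a(λ)w_λ, w_λ, T_b(λ)w_λ)`, resp. `(0,0,v_λ)`. -/
theorem stmt12 (a b α β : ℝ) (ha : a < 0) (hb : 0 < b) (q r hh : ℝ → ℝ)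
    (hqm : Measurable q) (hqb : ∃ M, ∀ x, |q x| ≤ M)
    (hrm : Measurable r) (hrpos : ∃ m > 0, ∀ x, m ≤ r x) (hrb : ∃ M, ∀ x, r x ≤ M)
    (hhm : Measurable hh) (hhpos : ∃ m > 0, ∀ t, m ≤ hh t) (hhb : ∃ M, ∀ t, hh t ≤ M)
    (lam : ℂ) :
    -- case λ ∈ σ(A_a) only
    ((EigAa a α q r lam ∧ ¬ EigB hh lam ∧ ¬ EigAb b β q r lam) →
      ∀ ulam, EigfunAa a α q r lam ulam →
        EigvecA a b α β q r hh lam ulam ZeroF ZeroF ∧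
        (∀ u w v, EigvecA a b α β q r hh lam u w v → ∃ c : ℂ,
          (∀ x ∈ Icc a 0, u x = c * ulam x) ∧ (∀ t ∈ Icc (-1:ℝ) 1, w t = 0) ∧
          (∀ x ∈ Icc 0 b, v x = 0)) ∧
        ¬ ∃ u w v, DomA a b α β u w v ∧ MapA a b q r hh lam u w v ulam ZeroF ZeroF) ∧
    -- case λ ∈ σ(A_b) only
    ((EigAb b β q r lam ∧ ¬ EigAa a α q r lam ∧ ¬ EigB hh lam) →
      ∀ vlam, EigfunAb b β q r lam vlam →
        EigvecA a b α β q r hh lam ZeroF ZeroF vlam ∧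
        (∀ u w v, EigvecA a b α β q r hh lam u w v → ∃ c : ℂ,
          (∀ x ∈ Icc a 0, u x = 0) ∧ (∀ t ∈ Icc (-1:ℝ) 1, w t = 0) ∧
          (∀ x ∈ Icc 0 b, v x = c * vlam x)) ∧
        ¬ ∃ u w v, DomA a b α β u w v ∧ MapA a b q r hh lam u w v ZeroF ZeroF vlam) ∧
    -- case λ ∈ σ(B) only
    ((EigB hh lam ∧ ¬ EigAa a α q r lam ∧ ¬ EigAb b β q r lam) →
      ∀ wlam, EigfunB hh lam wlam →
        ∀ u v, SolAa a α q r lam (wlam (-1)) u → SolAb b β q r lam (wlam 1) v →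
          EigvecA a b α β q r hh lam u wlam v ∧
          (∀ u' w' v', EigvecA a b α β q r hh lam u' w' v' → ∃ c : ℂ,
            (∀ x ∈ Icc a 0, u' x = c * u x) ∧ (∀ t ∈ Icc (-1:ℝ) 1, w' t = c * wlam t) ∧
            (∀ x ∈ Icc 0 b, v' x = c * v x)) ∧
          ¬ ∃ u₁ w₁ v₁, DomA a b α β u₁ w₁ v₁ ∧
            MapA a b q r hh lam u₁ w₁ v₁ u wlam v) := by
  classical
  obtain ⟨Mq, hMq⟩ := hqb
  obtain ⟨m, hm, hmr⟩ := hrpos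
  obtain ⟨Mr, hMr⟩ := hrb
  obtain ⟨mh, hmh, hmhh⟩ := hhpos
  obtain ⟨Mh, hMh⟩ := hhb
  have hrpos' : ∀ x, 0 < r x := fun x => lt_of_lt_of_le hm (hmr x)
  have hhpos' : ∀ x, 0 < hh x := fun x => lt_of_lt_of_le hmh (hmhh x)
  -- membership facts
  have ha0 : a ∈ Icc a (0:ℝ) := ⟨le_rfl, ha.le⟩
  have h0a : (0:ℝ) ∈ Icc a 0 := ⟨ha.le, le_rfl⟩
  have h0b : (0:ℝ) ∈ Icc (0:ℝ) b := ⟨le_rfl, hb.le⟩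
  have hbb : b ∈ Icc (0:ℝ) b := ⟨hb.le, le_rfl⟩
  have hm1 : (-1:ℝ) ∈ Icc (-1:ℝ) 1 := ⟨le_rfl, by norm_num⟩
  have h1m : (1:ℝ) ∈ Icc (-1:ℝ) 1 := ⟨by norm_num, le_rfl⟩
  have hm11 : (-1:ℝ) < 1 := by norm_num
  -- trig identities
  have htriga : (Real.cos α : ℂ)^2 + (Real.sin α : ℂ)^2 = 1 := by
    exact_mod_cast congrArg (fun t : ℝ => (t : ℂ)) (Real.cos_sq_add_sin_sq α)
  have htrigb : (Real.cos β : ℂ)^2 + (Real.sin β : ℂ)^2 = 1 := by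
    exact_mod_cast congrArg (fun t : ℝ => (t : ℂ)) (Real.cos_sq_add_sin_sq β)
  -- bounds on potentials
  have hPaB : ∀ x : ℝ, ‖(q x : ℂ) - lam * (r x : ℂ)‖ ≤ Mq + ‖lam‖ * Mr := by
    intro x
    calc ‖(q x : ℂ) - lam * (r x : ℂ)‖ ≤ ‖(q x : ℂ)‖ + ‖lam * (r x : ℂ)‖ := norm_sub_le _ _
      _ = |q x| + ‖lam‖ * |r x| := by
          rw [norm_mul, Complex.norm_real, Complex.norm_real, Real.norm_eq_abs, Real.norm_eq_abs]
      _ ≤ Mq + ‖lam‖ * Mr := by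
          have h1 := hMq x
          have h2 : |r x| ≤ Mr := by rw [abs_of_pos (hrpos' x)]; exact hMr x
          have h3 := mul_le_mul_of_nonneg_left h2 (norm_nonneg lam)
          linarith
  have hPBB : ∀ t : ℝ, ‖-(lam * (hh t : ℂ))‖ ≤ ‖lam‖ * Mh := by
    intro t
    rw [norm_neg, norm_mul, Complex.norm_real, Real.norm_eq_abs]
    have h2 : |hh t| ≤ Mh := by rw [abs_of_pos (hhpos' t)]; exact hMh t
    exact mul_le_mul_of_nonneg_left h2 (norm_nonneg lam)
  -- ZeroF facts
  have hZF : deriv ZeroF = ZeroF := by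
    have hz : ZeroF = fun _ : ℝ => (0:ℂ) := rfl
    funext x
    rw [hz]
    simp
  have hZFd : ∀ x, deriv ZeroF x = 0 := fun x => by rw [hZF]; rfl
  have regZF : ∀ s : Set ℝ, Reg2 ZeroF s := by
    intro s
    constructor
    · intro x _
      exact (differentiableAt_const (0:ℂ)).congr_of_eventuallyEq
        (Filter.Eventually.of_forall (fun y => rfl))
    · intro x _
      rw [hZF]
      exact (differentiableAt_const (0:ℂ)).congr_of_eventuallyEq
        (Filter.Eventually.of_forall (fun y => rfl))
  -- converting equations to HasDerivAt data
  have dataQR : ∀ (s : Set ℝ) (u : ℝ → ℂ), (∀ x ∈ s, DifferentiableAt ℝ (deriv u) x) →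
      (∀ x ∈ s, -(deriv (deriv u) x) + (q x : ℂ) * u x = lam * (r x : ℂ) * u x) →
      ∀ x ∈ s, HasDerivAt (deriv u) (((q x : ℂ) - lam * (r x : ℂ)) * u x) x := by
    intro s u hd heq x hx
    have h := (hd x hx).hasDerivAt
    have he : deriv (deriv u) x = ((q x : ℂ) - lam * (r x : ℂ)) * u x := by
      linear_combination -(heq x hx)
    rwa [he] at h
  have dataQR' : ∀ (s : Set ℝ) (u f : ℝ → ℂ), (∀ x ∈ s, DifferentiableAt ℝ (deriv u) x) →
      (∀ x ∈ s, -(deriv (deriv u) x) + (q x : ℂ) * u x - lam * (r x : ℂ) * u x = (r x : ℂ) * f x) →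
      ∀ x ∈ s, HasDerivAt (deriv u) (((q x : ℂ) - lam * (r x : ℂ)) * u x - (r x : ℂ) * f x) x := by
    intro s u f hd heq x hx
    have h := (hd x hx).hasDerivAt
    have he : deriv (deriv u) x = ((q x : ℂ) - lam * (r x : ℂ)) * u x - (r x : ℂ) * f x := by
      linear_combination -(heq x hx)
    rwa [he] at h
  have dataB : ∀ (w : ℝ → ℂ), (∀ t ∈ Icc (-1:ℝ) 1, DifferentiableAt ℝ (deriv w) t) →
      (∀ t ∈ Icc (-1:ℝ) 1, -(deriv (deriv w) t) = lam * (hh t : ℂ) * w t) →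
      ∀ t ∈ Icc (-1:ℝ) 1, HasDerivAt (deriv w) ((-(lam * (hh t : ℂ))) * w t) t := by
    intro w hd heq t ht
    have h := (hd t ht).hasDerivAt
    have he : deriv (deriv w) t = (-(lam * (hh t : ℂ))) * w t := by
      linear_combination -(heq t ht)
    rwa [he] at h
  have dataB' : ∀ (w g : ℝ → ℂ), (∀ t ∈ Icc (-1:ℝ) 1, DifferentiableAt ℝ (deriv w) t) →
      (∀ t ∈ Icc (-1:ℝ) 1, -(deriv (deriv w) t) - lam * (hh t : ℂ) * w t = (hh t : ℂ) * g t) →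
      ∀ t ∈ Icc (-1:ℝ) 1, HasDerivAt (deriv w) ((-(lam * (hh t : ℂ))) * w t - (hh t : ℂ) * g t) t := by
    intro w g hd heq t ht
    have h := (hd t ht).hasDerivAt
    have he : deriv (deriv w) t = (-(lam * (hh t : ℂ))) * w t - (hh t : ℂ) * g t := by
      linear_combination -(heq t ht)
    rwa [he] at h
  -- triviality from non-eigenvalue hypotheses
  have wzero : ∀ (_ : ¬ EigB hh lam) (w : ℝ → ℂ), Reg2 w (Icc (-1) 1) →
      (∀ t ∈ Icc (-1:ℝ) 1, -(deriv (deriv w) t) = lam * (hh t : ℂ) * w t) →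
      deriv w (-1) = 0 → deriv w 1 = 0 → ∀ t ∈ Icc (-1:ℝ) 1, w t = 0 := by
    intro hnB w hreg heq h1 h2 t ht
    by_contra hne
    exact hnB ⟨w, hreg, heq, h1, h2, t, ht, hne⟩
  have uzero : ∀ (_ : ¬ EigAa a α q r lam) (u : ℝ → ℂ), Reg2 u (Icc a 0) →
      (∀ x ∈ Icc a 0, -(deriv (deriv u) x) + (q x : ℂ) * u x = lam * (r x : ℂ) * u x) →
      u a * (Real.cos α : ℂ) + deriv u a * (Real.sin α : ℂ) = 0 → u 0 = 0 →
      ∀ x ∈ Icc a 0, u x = 0 := by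
    intro hnA u hreg heq hbc h0 x hx
    by_contra hne
    exact hnA ⟨u, hreg, heq, hbc, h0, x, hx, hne⟩
  have vzero : ∀ (_ : ¬ EigAb b β q r lam) (v : ℝ → ℂ), Reg2 v (Icc 0 b) →
      (∀ x ∈ Icc 0 b, -(deriv (deriv v) x) + (q x : ℂ) * v x = lam * (r x : ℂ) * v x) →
      v 0 = 0 → v b * (Real.cos β : ℂ) + deriv v b * (Real.sin β : ℂ) = 0 →
      ∀ x ∈ Icc 0 b, v x = 0 := by
    intro hnA v hreg heq h0 hbc x hx
    by_contra hne
    exact hnA ⟨v, hreg, heq, h0, hbc, x, hx, hne⟩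
  -- conjugate of P is P when lam is real
  have hPaform : ∀ x : ℝ, ((q x : ℂ) - lam * (r x : ℂ)) - (starRingEnd ℂ) ((q x : ℂ) - lam * (r x : ℂ))
      = ((starRingEnd ℂ) lam - lam) * (r x : ℂ) := by
    intro x
    simp only [map_sub, map_mul, Complex.conj_ofReal]
    ring
  have hPBform : ∀ t : ℝ, (-(lam * (hh t : ℂ))) - (starRingEnd ℂ) (-(lam * (hh t : ℂ)))
      = ((starRingEnd ℂ) lam - lam) * (hh t : ℂ) := by
    intro t
    simp only [map_neg, map_mul, Complex.conj_ofReal]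
    ring
  refine ⟨?_, ?_, ?_⟩
  ----------------------------------------------------------------
  -- PART 1 : λ ∈ σ(A_a) only
  ----------------------------------------------------------------
  · rintro ⟨-, hnB, hnAb⟩ ulam ⟨hreg, heq, hbc, h00, hnt⟩
    have hl1 : ∀ x ∈ Icc a 0, HasDerivAt ulam (deriv ulam x) x :=
      fun x hx => (hreg.1 x hx).hasDerivAt
    have hl2 := dataQR (Icc a 0) ulam hreg.2 heq
    refine ⟨?_, ?_, ?_⟩
    · -- ulam is an eigenvector
      refine ⟨⟨hreg, regZF _, regZF _, hbc, hZFd _, hZFd _, ?_, ?_, rfl⟩, ⟨?_, ?_, ?_⟩, Or.inl hnt⟩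
      · simp [ZeroF, hZFd]
      · rw [h00]; rfl
      · intro x hx
        simp only [ZeroF, mul_zero]
        linear_combination heq x hx
      · intro t ht
        simp only [hZF, ZeroF, mul_zero]
        ring
      · intro x hx
        simp only [hZF, ZeroF, mul_zero]
        ring
    · -- geometric simplicity
      rintro u w v ⟨⟨hregu, hregw, hregv, hbcu, hw1, hw2, hbcv, hc1, hc2⟩, ⟨hmu, hmw, hmv⟩, -⟩
      have hweq : ∀ t ∈ Icc (-1:ℝ) 1, -(deriv (deriv w) t) = lam * (hh t : ℂ) * w t := by
        intro t ht
        have h2 := hmw t ht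
        simp only [ZeroF, mul_zero] at h2
        linear_combination h2
      have hw0 := wzero hnB w hregw hweq hw1 hw2
      have hveq : ∀ x ∈ Icc 0 b, -(deriv (deriv v) x) + (q x : ℂ) * v x = lam * (r x : ℂ) * v x := by
        intro x hx
        have h2 := hmv x hx
        simp only [ZeroF, mul_zero] at h2
        linear_combination h2
      have hv00 : v 0 = 0 := by rw [hc2]; exact hw0 1 h1m
      have hv0 := vzero hnAb v hregv hveq hv00 hbcv
      have hueq : ∀ x ∈ Icc a 0, -(deriv (deriv u) x) + (q x : ℂ) * u x = lam * (r x : ℂ) * u x := by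
        intro x hx
        have h2 := hmu x hx
        simp only [ZeroF, mul_zero] at h2
        linear_combination h2
      have hu1 : ∀ x ∈ Icc a 0, HasDerivAt u (deriv u x) x :=
        fun x hx => (hregu.1 x hx).hasDerivAt
      have hu2 := dataQR (Icc a 0) u hregu.2 hueq
      have hW : u a * deriv ulam a - deriv u a * ulam a = 0 := wronskian_bc htriga hbcu hbc
      obtain ⟨cc, hcc⟩ := ode_prop (M := Mq + ‖lam‖ * Mr) (fun x _ => hPaB x)
        hu1 hu2 hl1 hl2 ha0 hW hnt
      exact ⟨cc, hcc, hw0, hv0⟩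
    · -- no generalized eigenvector
      rintro ⟨u, w, v, ⟨hregu, hregw, hregv, hbcu, hw1, hw2, hbcv, hc1, hc2⟩, hmu, hmw, hmv⟩
      have hweq : ∀ t ∈ Icc (-1:ℝ) 1, -(deriv (deriv w) t) = lam * (hh t : ℂ) * w t := by
        intro t ht
        have h2 := hmw t ht
        simp only [ZeroF, mul_zero] at h2
        linear_combination h2
      have hw0 := wzero hnB w hregw hweq hw1 hw2
      have hu00 : u 0 = 0 := by rw [hc1]; exact hw0 (-1) hm1
      have hbcc : (starRingEnd ℂ) (ulam a) * (Real.cos α : ℂ) +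
          (starRingEnd ℂ) (deriv ulam a) * (Real.sin α : ℂ) = 0 := by
        have h2 := congrArg (starRingEnd ℂ) hbc
        simpa only [map_add, map_mul, map_zero, Complex.conj_ofReal] using h2
      have hWconj := wronskian_bc htriga hbcc hbc
      have him : lam.im = 0 := by
        apply im_zero (c := a) (d := 0) ha hrpos' (fun x _ => hPaform x) hl1 hl2 hnt
        · linear_combination hWconj
        · rw [h00]
          simp
      have hconjlam : (starRingEnd ℂ) lam = lam := Complex.conj_eq_iff_im.mpr him
      apply fredholm (c := a) (d := 0) (M := Mq + ‖lam‖ * Mr) ha hrpos' (fun x _ => hPaB x)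
        (fun x _ => by rw [map_sub, map_mul, Complex.conj_ofReal, Complex.conj_ofReal, hconjlam])
        hl1 hl2 hnt ha0 hWconj (fun x hx => (hregu.1 x hx).hasDerivAt)
        (dataQR' (Icc a 0) u ulam hregu.2 hmu) ?_ ?_
      · linear_combination -(wronskian_bc htriga hbcu hbc)
      · rw [h00, hu00]
        ring
  ----------------------------------------------------------------
  -- PART 2 : λ ∈ σ(A_b) only
  ----------------------------------------------------------------
  · rintro ⟨-, hnAa, hnB⟩ vlam ⟨hreg, heq, h00, hbc, hnt⟩
    have hl1 : ∀ x ∈ Icc 0 b, HasDerivAt vlam (deriv vlam x) x :=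
      fun x hx => (hreg.1 x hx).hasDerivAt
    have hl2 := dataQR (Icc 0 b) vlam hreg.2 heq
    refine ⟨?_, ?_, ?_⟩
    · refine ⟨⟨regZF _, regZF _, hreg, ?_, hZFd _, hZFd _, hbc, rfl, ?_⟩, ⟨?_, ?_, ?_⟩,
        Or.inr (Or.inr hnt)⟩
      · simp [ZeroF, hZFd]
      · rw [h00]; rfl
      · intro x hx
        simp only [hZF, ZeroF, mul_zero]
        ring
      · intro t ht
        simp only [hZF, ZeroF, mul_zero]
        ring
      · intro x hx
        simp only [ZeroF, mul_zero]
        linear_combination heq x hx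
    · rintro u w v ⟨⟨hregu, hregw, hregv, hbcu, hw1, hw2, hbcv, hc1, hc2⟩, ⟨hmu, hmw, hmv⟩, -⟩
      have hweq : ∀ t ∈ Icc (-1:ℝ) 1, -(deriv (deriv w) t) = lam * (hh t : ℂ) * w t := by
        intro t ht
        have h2 := hmw t ht
        simp only [ZeroF, mul_zero] at h2
        linear_combination h2
      have hw0 := wzero hnB w hregw hweq hw1 hw2
      have hueq : ∀ x ∈ Icc a 0, -(deriv (deriv u) x) + (q x : ℂ) * u x = lam * (r x : ℂ) * u x := by
        intro x hx
        have h2 := hmu x hx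
        simp only [ZeroF, mul_zero] at h2
        linear_combination h2
      have hu00 : u 0 = 0 := by rw [hc1]; exact hw0 (-1) hm1
      have hu0 := uzero hnAa u hregu hueq hbcu hu00
      have hveq : ∀ x ∈ Icc 0 b, -(deriv (deriv v) x) + (q x : ℂ) * v x = lam * (r x : ℂ) * v x := by
        intro x hx
        have h2 := hmv x hx
        simp only [ZeroF, mul_zero] at h2
        linear_combination h2
      have hv1 : ∀ x ∈ Icc 0 b, HasDerivAt v (deriv v x) x :=
        fun x hx => (hregv.1 x hx).hasDerivAt
      have hv2 := dataQR (Icc 0 b) v hregv.2 hveq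
      have hW : v b * deriv vlam b - deriv v b * vlam b = 0 := wronskian_bc htrigb hbcv hbc
      obtain ⟨cc, hcc⟩ := ode_prop (M := Mq + ‖lam‖ * Mr) (fun x _ => hPaB x)
        hv1 hv2 hl1 hl2 hbb hW hnt
      exact ⟨cc, hu0, hw0, hcc⟩
    · rintro ⟨u, w, v, ⟨hregu, hregw, hregv, hbcu, hw1, hw2, hbcv, hc1, hc2⟩, hmu, hmw, hmv⟩
      have hweq : ∀ t ∈ Icc (-1:ℝ) 1, -(deriv (deriv w) t) = lam * (hh t : ℂ) * w t := by
        intro t ht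
        have h2 := hmw t ht
        simp only [ZeroF, mul_zero] at h2
        linear_combination h2
      have hw0 := wzero hnB w hregw hweq hw1 hw2
      have hv00 : v 0 = 0 := by rw [hc2]; exact hw0 1 h1m
      have hbcc : (starRingEnd ℂ) (vlam b) * (Real.cos β : ℂ) +
          (starRingEnd ℂ) (deriv vlam b) * (Real.sin β : ℂ) = 0 := by
        have h2 := congrArg (starRingEnd ℂ) hbc
        simpa only [map_add, map_mul, map_zero, Complex.conj_ofReal] using h2
      have hWconj := wronskian_bc htrigb hbcc hbc
      have him : lam.im = 0 := by
        apply im_zero (c := 0) (d := b) hb hrpos' (fun x _ => hPaform x) hl1 hl2 hnt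
        · rw [h00]
          simp
        · linear_combination hWconj
      have hconjlam : (starRingEnd ℂ) lam = lam := Complex.conj_eq_iff_im.mpr him
      apply fredholm (c := 0) (d := b) (M := Mq + ‖lam‖ * Mr) hb hrpos' (fun x _ => hPaB x)
        (fun x _ => by rw [map_sub, map_mul, Complex.conj_ofReal, Complex.conj_ofReal, hconjlam])
        hl1 hl2 hnt hbb hWconj (fun x hx => (hregv.1 x hx).hasDerivAt)
        (dataQR' (Icc 0 b) v vlam hregv.2 hmv) ?_ ?_
      · rw [h00, hv00]
        ring
      · linear_combination -(wronskian_bc htrigb hbcv hbc)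
  ----------------------------------------------------------------
  -- PART 3 : λ ∈ σ(B) only
  ----------------------------------------------------------------
  · rintro ⟨-, hnAa, hnAb⟩ wlam ⟨hregw, heqw, hd1, hd2, hntw⟩ u v
      ⟨hregu, hequ, hbcu, hu0⟩ ⟨hregv, heqv, hv0, hbcv⟩
    have hwl1 : ∀ t ∈ Icc (-1:ℝ) 1, HasDerivAt wlam (deriv wlam t) t :=
      fun t ht => (hregw.1 t ht).hasDerivAt
    have hwl2 := dataB wlam hregw.2 heqw
    refine ⟨?_, ?_, ?_⟩
    · refine ⟨⟨hregu, hregw, hregv, hbcu, hd1, hd2, hbcv, hu0, hv0⟩, ⟨?_, ?_, ?_⟩,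
        Or.inr (Or.inl hntw)⟩
      · intro x hx
        simp only [ZeroF, mul_zero]
        linear_combination hequ x hx
      · intro t ht
        simp only [ZeroF, mul_zero]
        linear_combination heqw t ht
      · intro x hx
        simp only [ZeroF, mul_zero]
        linear_combination heqv x hx
    · rintro u' w' v' ⟨⟨hregu', hregw', hregv', hbcu', hw1', hw2', hbcv', hc1', hc2'⟩,
        ⟨hmu', hmw', hmv'⟩, -⟩
      have hw'eq : ∀ t ∈ Icc (-1:ℝ) 1, -(deriv (deriv w') t) = lam * (hh t : ℂ) * w' t := by
        intro t ht
        have h2 := hmw' t ht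
        simp only [ZeroF, mul_zero] at h2
        linear_combination h2
      have hw'1 : ∀ t ∈ Icc (-1:ℝ) 1, HasDerivAt w' (deriv w' t) t :=
        fun t ht => (hregw'.1 t ht).hasDerivAt
      have hw'2 := dataB w' hregw'.2 hw'eq
      have hWm : w' (-1) * deriv wlam (-1) - deriv w' (-1) * wlam (-1) = 0 := by
        rw [hd1, hw1']
        ring
      obtain ⟨cc, hccw⟩ := ode_prop (M := ‖lam‖ * Mh) (fun t _ => hPBB t)
        hw'1 hw'2 hwl1 hwl2 hm1 hWm hntw
      -- u' = cc * u on [a,0]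
      have hueq' : ∀ x ∈ Icc a 0, -(deriv (deriv u') x) + (q x : ℂ) * u' x
          = lam * (r x : ℂ) * u' x := by
        intro x hx
        have h2 := hmu' x hx
        simp only [ZeroF, mul_zero] at h2
        linear_combination h2
      have hveq' : ∀ x ∈ Icc 0 b, -(deriv (deriv v') x) + (q x : ℂ) * v' x
          = lam * (r x : ℂ) * v' x := by
        intro x hx
        have h2 := hmv' x hx
        simp only [ZeroF, mul_zero] at h2
        linear_combination h2
      have hz00 : u' 0 - cc * u 0 = 0 := by
        rw [hc1', hccw (-1) hm1, hu0]
        ring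
      have huz : ∀ x ∈ Icc a 0, u' x = cc * u x := by
        by_contra hne
        push_neg at hne
        obtain ⟨x1, hx1, hne1⟩ := hne
        have hz1 : ∀ x ∈ Icc a 0, HasDerivAt (fun y => u' y - cc * u y)
            ((fun y => deriv u' y - cc * deriv u y) x) x :=
          fun x hx => ((hregu'.1 x hx).hasDerivAt).sub (((hregu.1 x hx).hasDerivAt).const_mul cc)
        have hz2 : ∀ x ∈ Icc a 0, HasDerivAt (fun y => deriv u' y - cc * deriv u y)
            ((fun x => ((q x : ℂ) - lam * (r x : ℂ)) * (u' x - cc * u x)) x) x := by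
          intro x hx
          have h2 := (dataQR (Icc a 0) u' hregu'.2 hueq' x hx).sub
            ((dataQR (Icc a 0) u hregu.2 hequ x hx).const_mul cc)
          refine h2.congr_deriv (Eq.symm ?_)
          ring
        obtain ⟨Z, hZeq, hZreg, hZ1, hZ2⟩ := ext2 ha hz1 hz2
        apply hnAa
        refine ⟨Z, hZreg, ?_, ?_, ?_, x1, hx1, ?_⟩
        · intro x hx
          rw [hZ2 x hx, hZeq x hx]
          ring
        · rw [hZeq a ha0, hZ1 a ha0]
          linear_combination hbcu' - cc * hbcu
        · rw [hZeq 0 h0a]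
          exact hz00
        · rw [hZeq x1 hx1]
          exact sub_ne_zero.mpr hne1
      have hy00 : v' 0 - cc * v 0 = 0 := by
        rw [hc2', hccw 1 h1m, hv0]
        ring
      have hvz : ∀ x ∈ Icc 0 b, v' x = cc * v x := by
        by_contra hne
        push_neg at hne
        obtain ⟨x1, hx1, hne1⟩ := hne
        have hz1 : ∀ x ∈ Icc 0 b, HasDerivAt (fun y => v' y - cc * v y)
            ((fun y => deriv v' y - cc * deriv v y) x) x :=
          fun x hx => ((hregv'.1 x hx).hasDerivAt).sub (((hregv.1 x hx).hasDerivAt).const_mul cc)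
        have hz2 : ∀ x ∈ Icc 0 b, HasDerivAt (fun y => deriv v' y - cc * deriv v y)
            ((fun x => ((q x : ℂ) - lam * (r x : ℂ)) * (v' x - cc * v x)) x) x := by
          intro x hx
          have h2 := (dataQR (Icc 0 b) v' hregv'.2 hveq' x hx).sub
            ((dataQR (Icc 0 b) v hregv.2 heqv x hx).const_mul cc)
          refine h2.congr_deriv (Eq.symm ?_)
          ring
        obtain ⟨Z, hZeq, hZreg, hZ1, hZ2⟩ := ext2 hb hz1 hz2
        apply hnAb
        refine ⟨Z, hZreg, ?_, ?_, ?_, x1, hx1, ?_⟩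
        · intro x hx
          rw [hZ2 x hx, hZeq x hx]
          ring
        · rw [hZeq 0 h0b]
          exact hy00
        · rw [hZeq b hbb, hZ1 b hbb]
          linear_combination hbcv' - cc * hbcv
        · rw [hZeq x1 hx1]
          exact sub_ne_zero.mpr hne1
      exact ⟨cc, huz, hccw, hvz⟩
    · rintro ⟨u₁, w₁, v₁, ⟨hregu₁, hregw₁, hregv₁, hbcu₁, hw11, hw12, hbcv₁, hc11, hc12⟩,
        hmu₁, hmw₁, hmv₁⟩
      have him : lam.im = 0 := by
        apply im_zero (c := (-1:ℝ)) (d := 1) hm11 hhpos' (fun t _ => hPBform t) hwl1 hwl2 hntw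
        · rw [hd1]
          simp
        · rw [hd2]
          simp
      have hconjlam : (starRingEnd ℂ) lam = lam := Complex.conj_eq_iff_im.mpr him
      apply fredholm (c := (-1:ℝ)) (d := 1) (M := ‖lam‖ * Mh) hm11 hhpos' (fun t _ => hPBB t)
        (fun t _ => by rw [map_neg, map_mul, Complex.conj_ofReal, hconjlam])
        hwl1 hwl2 hntw hm1 ?_ (fun t ht => (hregw₁.1 t ht).hasDerivAt)
        (dataB' w₁ wlam hregw₁.2 hmw₁) ?_ ?_
      · rw [hd1]
        simp
      · rw [hw11, hd1]
        ring
      · rw [hw12, hd2]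
        ring
end

section
/- With 𝓐, A_a, A_b, B as in the limit problem: if λ ∈ σ(A_a) ∩ σ(A_b) but λ ∉ σ(B), then λ is an eigenvalue of 𝓐 with geometric and algebraic multiplicity 2; the eigenspace is spanned by U = (u_λ, 0, 0) and V = (0, 0, v_λ), and the equation (𝓐 − λ)Y = c₁U + c₂V has no solution unless c₁ = c₂ = 0. In particular the root subspace equals the eigenspace (no Jordan chains). -/
open Set

open MeasureTheory

section Helpers

lemma bc_wronskian (α : ℝ) (p p' s s' : ℂ)
    (h1 : p * (Real.cos α : ℂ) + p' * (Real.sin α : ℂ) = 0)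
    (h2 : s * (Real.cos α : ℂ) + s' * (Real.sin α : ℂ) = 0) :
    p' * s - p * s' = 0 := by
  by_cases hs : (Real.sin α : ℂ) = 0
  · have hc : (Real.cos α : ℂ) ≠ 0 := by
      intro hc
      have := Real.sin_sq_add_cos_sq α
      have hs' : Real.sin α = 0 := by exact_mod_cast hs
      have hc' : Real.cos α = 0 := by exact_mod_cast hc
      rw [hs', hc'] at this; norm_num at this
    have hp : p = 0 := by
      have := h1; rw [hs, mul_zero, add_zero] at this
      exact (mul_eq_zero.mp this).resolve_right hc
    have hq : s = 0 := by
      have := h2; rw [hs, mul_zero, add_zero] at this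
      exact (mul_eq_zero.mp this).resolve_right hc
    rw [hp, hq]; ring
  · have : (p' * s - p * s') * (Real.sin α : ℂ) = 0 := by
      linear_combination s * h1 - p * h2
    exact (mul_eq_zero.mp this).resolve_right hs

lemma conj_bc (α : ℝ) (p p' : ℂ)
    (h : p * (Real.cos α : ℂ) + p' * (Real.sin α : ℂ) = 0) :
    star p * (Real.cos α : ℂ) + star p' * (Real.sin α : ℂ) = 0 := by
  have hsc : star ((Real.cos α : ℂ)) = (Real.cos α : ℂ) := by
    rw [Complex.star_def, Complex.conj_ofReal]
  have hss : star ((Real.sin α : ℂ)) = (Real.sin α : ℂ) := by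
    rw [Complex.star_def, Complex.conj_ofReal]
  have := congrArg star h
  rw [star_add, star_mul', star_mul', star_zero, hsc, hss] at this
  exact this

lemma integ_real (c d : ℝ) (hcd : c ≤ d) (r : ℝ → ℝ) (hrm : Measurable r)
    (M : ℝ) (hM : ∀ x, |r x| ≤ M) (A : ℝ → ℝ) (hA : ContinuousOn A (Icc c d)) :
    IntervalIntegrable (fun x => r x * A x) volume c d := by
  rw [intervalIntegrable_iff_integrableOn_Ioc_of_le hcd]
  obtain ⟨C, hC⟩ := (isCompact_Icc (a := c) (b := d)).exists_bound_of_continuousOn hA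
  have hmeas : AEStronglyMeasurable (fun x => r x * A x) (volume.restrict (Ioc c d)) := by
    refine AEStronglyMeasurable.mul (hrm.aestronglyMeasurable) ?_
    exact ((hA.mono Ioc_subset_Icc_self).aestronglyMeasurable measurableSet_Ioc)
  refine Integrable.mono' (integrable_const (M * C)) hmeas ?_
  filter_upwards [ae_restrict_mem measurableSet_Ioc] with x hx
  have h1 : ‖A x‖ ≤ C := hC x (Ioc_subset_Icc_self hx)
  have h2 : ‖r x‖ ≤ M := hM x
  calc ‖r x * A x‖ = ‖r x‖ * ‖A x‖ := norm_mul _ _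
    _ ≤ M * C := by
        apply mul_le_mul h2 h1 (norm_nonneg _) ((abs_nonneg _).trans (hM x))

lemma pos_int (c d : ℝ) (hcd : c < d) (r : ℝ → ℝ) (hrm : Measurable r)
    (m : ℝ) (hm : 0 < m) (hr : ∀ x, m ≤ r x) (M : ℝ) (hM : ∀ x, r x ≤ M)
    (A : ℝ → ℂ) (hA : ∀ x ∈ Icc c d, ContinuousAt A x)
    (x₀ : ℝ) (hx₀ : x₀ ∈ Icc c d) (hne : A x₀ ≠ 0) :
    0 < ∫ x in c..d, r x * Complex.normSq (A x) := by
  have habs : ∀ x, |r x| ≤ M := fun x =>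
    abs_le.mpr ⟨by linarith [hr x, hM x, hm], hM x⟩
  have hAcont : ContinuousOn (fun x => Complex.normSq (A x)) (Icc c d) :=
    fun x hx => (Complex.continuous_normSq.continuousAt.comp (hA x hx)).continuousWithinAt
  have hint : IntervalIntegrable (fun x => r x * Complex.normSq (A x)) volume c d :=
    integ_real c d hcd.le r hrm M habs _ hAcont
  have hc := hA x₀ hx₀
  have hpos : 0 < ‖A x₀‖ / 2 := half_pos (norm_pos_iff.mpr hne)
  obtain ⟨δ, hδ, hball⟩ := Metric.continuousAt_iff.mp hc (‖A x₀‖ / 2) hpos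
  set c' := max c (x₀ - δ/2) with hc'
  set d' := min d (x₀ + δ/2) with hd'
  have hcc' : c ≤ c' := le_max_left _ _
  have hd'd : d' ≤ d := min_le_left _ _
  have hc'd' : c' < d' := by
    apply max_lt <;> apply lt_min
    · exact hcd
    · rcases hx₀ with ⟨h1, h2⟩; linarith
    · rcases hx₀ with ⟨h1, h2⟩; linarith
    · linarith
  have hlow : ∀ x ∈ Icc c' d', m * (‖A x₀‖/2)^2 ≤ r x * Complex.normSq (A x) := by
    intro x hx
    have hd1 : dist x x₀ < δ := by
      rw [Real.dist_eq, abs_lt]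
      rcases hx with ⟨h1, h2⟩
      constructor
      · have := le_trans (le_max_right c (x₀ - δ/2)) h1; linarith
      · have := le_trans h2 (min_le_right d (x₀ + δ/2)); linarith
    have := hball hd1
    have hnorm : ‖A x₀‖ / 2 ≤ ‖A x‖ := by
      have h3 : dist (A x) (A x₀) < ‖A x₀‖ / 2 := this
      have := norm_sub_norm_le (A x₀) (A x)
      rw [dist_eq_norm] at h3
      rw [norm_sub_rev] at this
      linarith
    have h4 : (‖A x₀‖/2)^2 ≤ Complex.normSq (A x) := by
      rw [← Complex.sq_norm]
      have : 0 ≤ ‖A x₀‖/2 := by positivity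
      calc (‖A x₀‖/2)^2 ≤ ‖A x‖^2 := by nlinarith
        _ = ‖A x‖ ^ 2 := rfl
    calc m * (‖A x₀‖/2)^2 ≤ r x * (‖A x₀‖/2)^2 := by
          apply mul_le_mul_of_nonneg_right (hr x) (by positivity)
      _ ≤ r x * Complex.normSq (A x) := by
          apply mul_le_mul_of_nonneg_left h4 (le_trans hm.le (hr x))
  have hsub : ∫ x in c'..d', r x * Complex.normSq (A x)
      ≤ ∫ x in c..d, r x * Complex.normSq (A x) := by
    apply intervalIntegral.integral_mono_interval hcc' hc'd'.le hd'd ?_ hint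
    filter_upwards with x
    exact mul_nonneg (le_trans hm.le (hr x)) (Complex.normSq_nonneg _)
  have hsub2 : (d' - c') * (m * (‖A x₀‖/2)^2)
      ≤ ∫ x in c'..d', r x * Complex.normSq (A x) := by
    have hconst : ∫ x in c'..d', m * (‖A x₀‖/2)^2 = (d' - c') * (m * (‖A x₀‖/2)^2) := by
      rw [intervalIntegral.integral_const]; simp [smul_eq_mul]
    rw [← hconst]
    apply intervalIntegral.integral_mono_on hc'd'.le intervalIntegrable_const
      (hint.mono_set (by rw [uIcc_of_le hc'd'.le, uIcc_of_le hcd.le]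
                         exact Icc_subset_Icc hcc' hd'd)) hlow
  have : 0 < (d' - c') * (m * (‖A x₀‖/2)^2) := by
    apply mul_pos (by linarith) (by positivity)
  linarith

lemma lagrange (c d : ℝ) (hcd : c ≤ d) (A B g : ℝ → ℂ)
    (hA : ∀ x ∈ Icc c d, DifferentiableAt ℝ A x)
    (hA' : ∀ x ∈ Icc c d, DifferentiableAt ℝ (deriv A) x)
    (hB : ∀ x ∈ Icc c d, DifferentiableAt ℝ B x)
    (hB' : ∀ x ∈ Icc c d, DifferentiableAt ℝ (deriv B) x)
    (heq : ∀ x ∈ Icc c d, deriv (deriv A) x * B x - A x * deriv (deriv B) x = g x)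
    (hint : IntervalIntegrable g volume c d) :
    ∫ x in c..d, g x
      = (deriv A d * B d - A d * deriv B d) - (deriv A c * B c - A c * deriv B c) := by
  have h := intervalIntegral.integral_eq_sub_of_hasDerivAt
    (f := fun t => deriv A t * B t - A t * deriv B t) (f' := g) (a := c) (b := d) ?_ hint
  · exact h
  · intro t ht
    rw [uIcc_of_le hcd] at ht
    have h1 : HasDerivAt A (deriv A t) t := (hA t ht).hasDerivAt
    have h2 : HasDerivAt (deriv A) (deriv (deriv A) t) t := (hA' t ht).hasDerivAt
    have h3 : HasDerivAt B (deriv B t) t := (hB t ht).hasDerivAt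
    have h4 : HasDerivAt (deriv B) (deriv (deriv B) t) t := (hB' t ht).hasDerivAt
    have := ((h2.mul h3).sub (h1.mul h4))
    rw [show deriv (deriv A) t * B t + deriv A t * deriv B t -
        (deriv A t * deriv B t + A t * deriv (deriv B) t)
        = deriv (deriv A) t * B t - A t * deriv (deriv B) t by ring] at this
    rw [heq t ht] at this
    exact this

lemma lagrange_conj (c d : ℝ) (hcd : c ≤ d) (A φ g : ℝ → ℂ)
    (hA : ∀ x ∈ Icc c d, DifferentiableAt ℝ A x)
    (hA' : ∀ x ∈ Icc c d, DifferentiableAt ℝ (deriv A) x)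
    (hφ : ∀ x ∈ Icc c d, DifferentiableAt ℝ φ x)
    (hφ' : ∀ x ∈ Icc c d, DifferentiableAt ℝ (deriv φ) x)
    (heq : ∀ x ∈ Icc c d,
      deriv (deriv A) x * star (φ x) - A x * star (deriv (deriv φ) x) = g x)
    (hint : IntervalIntegrable g volume c d) :
    ∫ x in c..d, g x
      = (deriv A d * star (φ d) - A d * star (deriv φ d))
        - (deriv A c * star (φ c) - A c * star (deriv φ c)) := by
  have hd1 : (deriv fun y => star (φ y)) = fun x => star (deriv φ x) := deriv.star'
  have h := lagrange c d hcd A (fun x => star (φ x)) g hA hA'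
    (fun x hx => (hφ x hx).star)
    (fun x hx => by rw [hd1]; exact (hφ' x hx).star)
    (fun x hx => by rw [hd1, deriv.star]; exact heq x hx)
    hint
  rw [hd1] at h
  exact h

noncomputable def vf (Q : ℝ → ℂ) : ℝ → ℂ × ℂ → ℂ × ℂ := fun t p => (p.2, Q t * p.1)

lemma vf_lip (C : ℝ) (Q : ℝ → ℂ) (hQ : ∀ x, ‖Q x‖ ≤ C) (t : ℝ) :
    LipschitzWith (Real.toNNReal (max 1 C)) (vf Q t) := by
  apply LipschitzWith.of_dist_le_mul
  intro x y
  simp only [vf]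
  rw [Prod.dist_eq, Prod.dist_eq]
  have hC0 : (0:ℝ) ≤ max 1 C := le_trans zero_le_one (le_max_left _ _)
  rw [Real.coe_toNNReal _ hC0]
  apply max_le
  · calc dist x.2 y.2 ≤ max (dist x.1 y.1) (dist x.2 y.2) := le_max_right _ _
      _ ≤ max 1 C * max (dist x.1 y.1) (dist x.2 y.2) := by
          nlinarith [le_max_left (dist x.1 y.1) (dist x.2 y.2),
            dist_nonneg (x := x.1) (y := y.1),
            dist_nonneg (x := x.2) (y := y.2), le_max_left (1:ℝ) C]
  · have : dist (Q t * x.1) (Q t * y.1) = ‖Q t‖ * dist x.1 y.1 := by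
      rw [dist_eq_norm, dist_eq_norm, ← mul_sub, norm_mul]
    rw [this]
    calc ‖Q t‖ * dist x.1 y.1 ≤ C * dist x.1 y.1 :=
          mul_le_mul_of_nonneg_right (hQ t) dist_nonneg
      _ ≤ max 1 C * max (dist x.1 y.1) (dist x.2 y.2) := by
          apply mul_le_mul (le_max_right _ _) (le_max_left _ _) dist_nonneg hC0

lemma uniq_from_left (c d : ℝ) (Q : ℝ → ℂ) (C : ℝ) (hQ : ∀ x, ‖Q x‖ ≤ C)
    (u₁ u₂ : ℝ → ℂ)
    (h1 : ∀ x ∈ Icc c d, DifferentiableAt ℝ u₁ x)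
    (h1' : ∀ x ∈ Icc c d, DifferentiableAt ℝ (deriv u₁) x)
    (h2 : ∀ x ∈ Icc c d, DifferentiableAt ℝ u₂ x)
    (h2' : ∀ x ∈ Icc c d, DifferentiableAt ℝ (deriv u₂) x)
    (ode1 : ∀ x ∈ Icc c d, deriv (deriv u₁) x = Q x * u₁ x)
    (ode2 : ∀ x ∈ Icc c d, deriv (deriv u₂) x = Q x * u₂ x)
    (hv : u₁ c = u₂ c) (hv' : deriv u₁ c = deriv u₂ c) :
    ∀ x ∈ Icc c d, u₁ x = u₂ x := by
  have key : EqOn (fun t => (u₁ t, deriv u₁ t)) (fun t => (u₂ t, deriv u₂ t)) (Icc c d) := by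
    apply ODE_solution_unique_of_mem_Icc_right
      (v := vf Q) (s := fun _ => (univ : Set (ℂ × ℂ))) (K := Real.toNNReal (max 1 C))
    · exact fun t _ => (vf_lip _ _ hQ t).lipschitzOnWith
    · intro x hx
      exact (((h1 x hx).continuousAt.prodMk (h1' x hx).continuousAt)).continuousWithinAt
    · intro t ht
      have ht' : t ∈ Icc c d := Ico_subset_Icc_self ht
      have := ((h1 t ht').hasDerivAt.prodMk (h1' t ht').hasDerivAt)
      rw [ode1 t ht'] at this
      exact this.hasDerivWithinAt
    · exact fun t _ => mem_univ _
    · intro x hx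
      exact (((h2 x hx).continuousAt.prodMk (h2' x hx).continuousAt)).continuousWithinAt
    · intro t ht
      have ht' : t ∈ Icc c d := Ico_subset_Icc_self ht
      have := ((h2 t ht').hasDerivAt.prodMk (h2' t ht').hasDerivAt)
      rw [ode2 t ht'] at this
      exact this.hasDerivWithinAt
    · exact fun t _ => mem_univ _
    · simp only [Prod.mk.injEq]; exact ⟨hv, hv'⟩
  intro x hx
  exact congrArg Prod.fst (key hx)

lemma uniq_from_right (c d : ℝ) (Q : ℝ → ℂ) (C : ℝ) (hQ : ∀ x, ‖Q x‖ ≤ C)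
    (u₁ u₂ : ℝ → ℂ)
    (h1 : ∀ x ∈ Icc c d, DifferentiableAt ℝ u₁ x)
    (h1' : ∀ x ∈ Icc c d, DifferentiableAt ℝ (deriv u₁) x)
    (h2 : ∀ x ∈ Icc c d, DifferentiableAt ℝ u₂ x)
    (h2' : ∀ x ∈ Icc c d, DifferentiableAt ℝ (deriv u₂) x)
    (ode1 : ∀ x ∈ Icc c d, deriv (deriv u₁) x = Q x * u₁ x)
    (ode2 : ∀ x ∈ Icc c d, deriv (deriv u₂) x = Q x * u₂ x)
    (hv : u₁ d = u₂ d) (hv' : deriv u₁ d = deriv u₂ d) :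
    ∀ x ∈ Icc c d, u₁ x = u₂ x := by
  have key : EqOn (fun t => (u₁ t, deriv u₁ t)) (fun t => (u₂ t, deriv u₂ t)) (Icc c d) := by
    apply ODE_solution_unique_of_mem_Icc_left
      (v := vf Q) (s := fun _ => (univ : Set (ℂ × ℂ))) (K := Real.toNNReal (max 1 C))
    · exact fun t _ => (vf_lip _ _ hQ t).lipschitzOnWith
    · intro x hx
      exact (((h1 x hx).continuousAt.prodMk (h1' x hx).continuousAt)).continuousWithinAt
    · intro t ht
      have ht' : t ∈ Icc c d := Ioc_subset_Icc_self ht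
      have := ((h1 t ht').hasDerivAt.prodMk (h1' t ht').hasDerivAt)
      rw [ode1 t ht'] at this
      exact this.hasDerivWithinAt
    · exact fun t _ => mem_univ _
    · intro x hx
      exact (((h2 x hx).continuousAt.prodMk (h2' x hx).continuousAt)).continuousWithinAt
    · intro t ht
      have ht' : t ∈ Icc c d := Ioc_subset_Icc_self ht
      have := ((h2 t ht').hasDerivAt.prodMk (h2' t ht').hasDerivAt)
      rw [ode2 t ht'] at this
      exact this.hasDerivWithinAt
    · exact fun t _ => mem_univ _
    · simp only [Prod.mk.injEq]; exact ⟨hv, hv'⟩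
  intro x hx
  exact congrArg Prod.fst (key hx)

lemma lam_real_aux (c d : ℝ) (hcd : c < d) (r : ℝ → ℝ) (hrm : Measurable r)
    (m : ℝ) (hm : 0 < m) (hrlow : ∀ x, m ≤ r x) (Mr : ℝ) (hMr : ∀ x, r x ≤ Mr)
    (q : ℝ → ℝ) (lam : ℂ) (Q : ℝ → ℂ)
    (hQdef : Q = fun x => (q x : ℂ) - lam * (r x : ℂ))
    (φ : ℝ → ℂ)
    (hφD : ∀ x ∈ Icc c d, DifferentiableAt ℝ φ x)
    (hφD' : ∀ x ∈ Icc c d, DifferentiableAt ℝ (deriv φ) x)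
    (hφode : ∀ x ∈ Icc c d, deriv (deriv φ) x = Q x * φ x)
    (x₀ : ℝ) (hx₀ : x₀ ∈ Icc c d) (hφne : φ x₀ ≠ 0)
    (hbd : deriv φ d * star (φ d) - φ d * star (deriv φ d) = 0)
    (hbc : deriv φ c * star (φ c) - φ c * star (deriv φ c) = 0) :
    star lam = lam := by
  have hrabs : ∀ x, |r x| ≤ Mr := fun x =>
    abs_le.mpr ⟨by linarith [hrlow x, hMr x, hm], hMr x⟩
  have h0 := integ_real c d hcd.le r hrm Mr hrabs (fun x => Complex.normSq (φ x))
    (fun x hx =>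
      (Complex.continuous_normSq.continuousAt.comp (hφD x hx).continuousAt).continuousWithinAt)
  have hint : IntervalIntegrable
      (fun x => (star lam - lam) * ((r x * Complex.normSq (φ x) : ℝ) : ℂ)) volume c d := by
    have hoc : IntervalIntegrable
        (fun x => ((r x * Complex.normSq (φ x) : ℝ) : ℂ)) volume c d :=
      ⟨h0.1.ofReal, h0.2.ofReal⟩
    exact hoc.const_mul _
  have hlag := lagrange_conj c d hcd.le φ φ
    (fun x => (star lam - lam) * ((r x * Complex.normSq (φ x) : ℝ) : ℂ))
    hφD hφD' hφD hφD' ?_ hint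
  · have hzero : (star lam - lam) * ((∫ x in c..d, r x * Complex.normSq (φ x) : ℝ) : ℂ) = 0 := by
      rw [← intervalIntegral.integral_ofReal, ← intervalIntegral.integral_const_mul,
        hlag, hbd, hbc]
      ring
    have hI := pos_int c d hcd r hrm m hm hrlow Mr hMr φ
      (fun x hx => (hφD x hx).continuousAt) x₀ hx₀ hφne
    have hne : ((∫ x in c..d, r x * Complex.normSq (φ x) : ℝ) : ℂ) ≠ 0 := by
      exact_mod_cast ne_of_gt hI
    have := (mul_eq_zero.mp hzero).resolve_right hne
    exact sub_eq_zero.mp this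
  · intro x hx
    rw [hφode x hx, star_mul']
    have hsQ : star (Q x) = (q x : ℂ) - star lam * (r x : ℂ) := by
      rw [hQdef]; simp [star_sub, star_mul']
    have hN : ((Complex.normSq (φ x) : ℝ) : ℂ) = φ x * star (φ x) := by
      rw [← Complex.mul_conj]; rfl
    rw [hsQ, Complex.ofReal_mul, hN, hQdef]
    ring

lemma kill (c d : ℝ) (hcd : c < d) (r : ℝ → ℝ) (hrm : Measurable r)
    (m : ℝ) (hm : 0 < m) (hrlow : ∀ x, m ≤ r x) (Mr : ℝ) (hMr : ∀ x, r x ≤ Mr)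
    (q : ℝ → ℝ) (lam : ℂ) (hreal : star lam = lam) (Q : ℝ → ℂ)
    (hQdef : Q = fun x => (q x : ℂ) - lam * (r x : ℂ))
    (cc : ℂ) (φ u : ℝ → ℂ)
    (hφD : ∀ x ∈ Icc c d, DifferentiableAt ℝ φ x)
    (hφD' : ∀ x ∈ Icc c d, DifferentiableAt ℝ (deriv φ) x)
    (huD : ∀ x ∈ Icc c d, DifferentiableAt ℝ u x)
    (huD' : ∀ x ∈ Icc c d, DifferentiableAt ℝ (deriv u) x)
    (hφode : ∀ x ∈ Icc c d, deriv (deriv φ) x = Q x * φ x)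
    (huode : ∀ x ∈ Icc c d, deriv (deriv u) x = Q x * u x - cc * (r x : ℂ) * φ x)
    (x₀ : ℝ) (hx₀ : x₀ ∈ Icc c d) (hφne : φ x₀ ≠ 0)
    (hbd : deriv u d * star (φ d) - u d * star (deriv φ d) = 0)
    (hbc : deriv u c * star (φ c) - u c * star (deriv φ c) = 0) :
    cc = 0 := by
  have hrabs : ∀ x, |r x| ≤ Mr := fun x =>
    abs_le.mpr ⟨by linarith [hrlow x, hMr x, hm], hMr x⟩
  have h0 := integ_real c d hcd.le r hrm Mr hrabs (fun x => Complex.normSq (φ x))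
    (fun x hx =>
      (Complex.continuous_normSq.continuousAt.comp (hφD x hx).continuousAt).continuousWithinAt)
  have hint : IntervalIntegrable
      (fun x => (-cc) * ((r x * Complex.normSq (φ x) : ℝ) : ℂ)) volume c d := by
    have hoc : IntervalIntegrable
        (fun x => ((r x * Complex.normSq (φ x) : ℝ) : ℂ)) volume c d :=
      ⟨h0.1.ofReal, h0.2.ofReal⟩
    exact hoc.const_mul _
  have hlag := lagrange_conj c d hcd.le u φ
    (fun x => (-cc) * ((r x * Complex.normSq (φ x) : ℝ) : ℂ))
    huD huD' hφD hφD' ?_ hint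
  · have hzero : (-cc) * ((∫ x in c..d, r x * Complex.normSq (φ x) : ℝ) : ℂ) = 0 := by
      rw [← intervalIntegral.integral_ofReal, ← intervalIntegral.integral_const_mul,
        hlag, hbd, hbc]
      ring
    have hI := pos_int c d hcd r hrm m hm hrlow Mr hMr φ
      (fun x hx => (hφD x hx).continuousAt) x₀ hx₀ hφne
    have hne : ((∫ x in c..d, r x * Complex.normSq (φ x) : ℝ) : ℂ) ≠ 0 := by
      exact_mod_cast ne_of_gt hI
    have := (mul_eq_zero.mp hzero).resolve_right hne
    simpa using this
  · intro x hx
    rw [huode x hx, hφode x hx, star_mul']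
    have hsQ : star (Q x) = Q x := by
      rw [hQdef]; simp [star_sub, star_mul', hreal]
    have hN : ((Complex.normSq (φ x) : ℝ) : ℂ) = φ x * star (φ x) := by
      rw [← Complex.mul_conj]; rfl
    rw [hsQ, Complex.ofReal_mul, hN, hQdef]
    ring

end Helpers

/-- if `λ ∈ σ(A_a) ∩ σ(A_b)` but `λ ∉ σ(B)`, then `λ` is an eigenvalue of
`𝓐` of geometric and algebraic multiplicity `2`: the eigenspace is spanned by
`U = (u_λ,0,0)` and `V = (0,0,v_λ)`, and `(𝓐 − λ)Y = c₁U + c₂V` has no solution unless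
`c₁ = c₂ = 0`; the root subspace equals the eigenspace. -/
theorem stmt13 (a b α β : ℝ) (ha : a < 0) (hb : 0 < b) (q r hh : ℝ → ℝ)
    (hqm : Measurable q) (hqb : ∃ M, ∀ x, |q x| ≤ M)
    (hrm : Measurable r) (hrpos : ∃ m > 0, ∀ x, m ≤ r x) (hrb : ∃ M, ∀ x, r x ≤ M)
    (hhm : Measurable hh) (hhpos : ∃ m > 0, ∀ t, m ≤ hh t) (hhb : ∃ M, ∀ t, hh t ≤ M)
    (lam : ℂ)
    (hB : ¬ EigB hh lam)
    (ulam vlam : ℝ → ℂ)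
    (hul : EigfunAa a α q r lam ulam) (hvl : EigfunAb b β q r lam vlam) :
    -- U and V are eigenvectors of 𝓐
    EigvecA a b α β q r hh lam ulam ZeroF ZeroF ∧
    EigvecA a b α β q r hh lam ZeroF ZeroF vlam ∧
    -- geometric multiplicity 2: every eigenvector is a combination of U and V
    (∀ u w v, EigvecA a b α β q r hh lam u w v → ∃ c₁ c₂ : ℂ,
      (∀ x ∈ Icc a 0, u x = c₁ * ulam x) ∧ (∀ t ∈ Icc (-1:ℝ) 1, w t = 0) ∧
      (∀ x ∈ Icc 0 b, v x = c₂ * vlam x)) ∧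
    -- no Jordan chains: (𝓐 − λ)Y = c₁U + c₂V is unsolvable unless c₁ = c₂ = 0
    (∀ c₁ c₂ : ℂ, ¬ (c₁ = 0 ∧ c₂ = 0) →
      ¬ ∃ u w v, DomA a b α β u w v ∧
        MapA a b q r hh lam u w v (fun x => c₁ * ulam x) ZeroF (fun x => c₂ * vlam x)) := by
  obtain ⟨Mq, hMq⟩ := hqb
  obtain ⟨m, hm, hrlow⟩ := hrpos
  obtain ⟨Mr, hMr⟩ := hrb
  set Q : ℝ → ℂ := fun x => (q x : ℂ) - lam * (r x : ℂ) with hQdef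
  set C : ℝ := Mq + ‖lam‖ * Mr with hCdef
  have hrabs : ∀ x, |r x| ≤ Mr := fun x =>
    abs_le.mpr ⟨by linarith [hrlow x, hMr x, hm], hMr x⟩
  have hQ : ∀ x, ‖Q x‖ ≤ C := by
    intro x
    calc ‖Q x‖ ≤ ‖(q x : ℂ)‖ + ‖lam * (r x : ℂ)‖ := norm_sub_le _ _
      _ = |q x| + ‖lam‖ * |r x| := by
          rw [Complex.norm_real, norm_mul, Complex.norm_real, Real.norm_eq_abs,
            Real.norm_eq_abs]
      _ ≤ Mq + ‖lam‖ * Mr :=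
          add_le_add (hMq x) (mul_le_mul_of_nonneg_left (hrabs x) (norm_nonneg _))
  obtain ⟨⟨hulD, hulD'⟩, hulode0, hulbc, hul0, x₀, hx₀, hx₀ne⟩ := hul
  obtain ⟨⟨hvlD, hvlD'⟩, hvlode0, hvl0, hvlbc, y₀, hy₀, hy₀ne⟩ := hvl
  have hulode : ∀ x ∈ Icc a 0, deriv (deriv ulam) x = Q x * ulam x := by
    intro x hx
    have h := hulode0 x hx
    simp only [hQdef]
    linear_combination -h
  have hvlode : ∀ x ∈ Icc 0 b, deriv (deriv vlam) x = Q x * vlam x := by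
    intro x hx
    have h := hvlode0 x hx
    simp only [hQdef]
    linear_combination -h
  -- facts about the zero function
  have hdz : deriv ZeroF = ZeroF := funext fun x => by
    simp only [ZeroF]; exact deriv_const x 0
  have hzdiff : ∀ x : ℝ, DifferentiableAt ℝ ZeroF x := fun x => by
    show DifferentiableAt ℝ (fun _ : ℝ => (0:ℂ)) x
    exact differentiableAt_const _
  have hzreg : ∀ s : Set ℝ, Reg2 ZeroF s := fun s =>
    ⟨fun x _ => hzdiff x, fun x _ => by rw [hdz]; exact hzdiff x⟩
  have hz0 : ∀ x : ℝ, ZeroF x = 0 := fun _ => rfl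
  -- λ is real
  have hbdry0 : deriv ulam 0 * star (ulam 0) - ulam 0 * star (deriv ulam 0) = 0 := by
    rw [hul0]; simp
  have hbdrya : deriv ulam a * star (ulam a) - ulam a * star (deriv ulam a) = 0 :=
    bc_wronskian α (ulam a) (deriv ulam a) (star (ulam a)) (star (deriv ulam a))
      hulbc (conj_bc α _ _ hulbc)
  have hlamreal : star lam = lam :=
    lam_real_aux a 0 ha r hrm m hm hrlow Mr hMr q lam Q hQdef ulam hulD hulD'
      hulode x₀ hx₀ hx₀ne hbdry0 hbdrya
  -- derivative of eigenfunctions at 0 is nonzero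
  have hulam'0 : deriv ulam 0 ≠ 0 := by
    intro hder0
    have hz := uniq_from_right a 0 Q C hQ ulam (fun _ => (0:ℂ)) hulD hulD'
      (fun x _ => differentiableAt_const _)
      (fun x _ => by rw [deriv_const']; exact differentiableAt_const _)
      hulode
      (fun x _ => by rw [deriv_const']; simp)
      (by simpa using hul0) (by rw [hder0, deriv_const'])
    exact hx₀ne (hz x₀ hx₀)
  have hvlam'0 : deriv vlam 0 ≠ 0 := by
    intro hder0
    have hz := uniq_from_left 0 b Q C hQ vlam (fun _ => (0:ℂ)) hvlD hvlD'
      (fun x _ => differentiableAt_const _)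
      (fun x _ => by rw [deriv_const']; exact differentiableAt_const _)
      hvlode
      (fun x _ => by rw [deriv_const']; simp)
      (by simpa using hvl0) (by rw [hder0, deriv_const'])
    exact hy₀ne (hz y₀ hy₀)
  refine ⟨?_, ?_, ?_, ?_⟩
  · -- U = (ulam, 0, 0) is an eigenvector
    refine ⟨⟨⟨hulD, hulD'⟩, hzreg _, hzreg _, hulbc, ?_, ?_, ?_, ?_, rfl⟩,
      ⟨?_, ?_, ?_⟩, Or.inl ⟨x₀, hx₀, hx₀ne⟩⟩
    · rw [hdz]; rfl
    · rw [hdz]; rfl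
    · rw [hdz]; simp [ZeroF]
    · rw [hul0]; rfl
    · intro x hx
      have h := hulode0 x hx
      simp only [ZeroF, mul_zero]
      linear_combination h
    · intro t _
      rw [hdz, hdz]; simp [ZeroF]
    · intro x _
      rw [hdz, hdz]; simp [ZeroF]
  · -- V = (0, 0, vlam) is an eigenvector
    refine ⟨⟨hzreg _, hzreg _, ⟨hvlD, hvlD'⟩, ?_, ?_, ?_, hvlbc, rfl, ?_⟩,
      ⟨?_, ?_, ?_⟩, Or.inr (Or.inr ⟨y₀, hy₀, hy₀ne⟩)⟩
    · rw [hdz]; simp [ZeroF]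
    · rw [hdz]; rfl
    · rw [hdz]; rfl
    · rw [hvl0]; rfl
    · intro x _
      rw [hdz, hdz]; simp [ZeroF]
    · intro t _
      rw [hdz, hdz]; simp [ZeroF]
    · intro x hx
      have h := hvlode0 x hx
      simp only [ZeroF, mul_zero]
      linear_combination h
  · -- geometric multiplicity 2
    rintro u w v ⟨⟨⟨huD, huD'⟩, hwreg, ⟨hvD, hvD'⟩, hubc, hw1, hw2, hvbc, hu0w, hv0w⟩,
      ⟨hmu, hmw, hmv⟩, -⟩
    have hwz : ∀ t ∈ Icc (-1:ℝ) 1, w t = 0 := by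
      by_contra hcon
      push_neg at hcon
      obtain ⟨t, ht, hwt⟩ := hcon
      refine hB ⟨w, hwreg, fun s hs => ?_, hw1, hw2, t, ht, hwt⟩
      have h := hmw s hs
      simp only [ZeroF, mul_zero] at h
      linear_combination h
    have hu0 : u 0 = 0 := hu0w.trans (hwz (-1) ⟨le_refl _, by norm_num⟩)
    have hv0 : v 0 = 0 := hv0w.trans (hwz 1 ⟨by norm_num, le_refl _⟩)
    have huode : ∀ x ∈ Icc a 0, deriv (deriv u) x = Q x * u x := by
      intro x hx
      have h := hmu x hx
      simp only [ZeroF, mul_zero] at h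
      simp only [hQdef]
      linear_combination -h
    have hvode : ∀ x ∈ Icc 0 b, deriv (deriv v) x = Q x * v x := by
      intro x hx
      have h := hmv x hx
      simp only [ZeroF, mul_zero] at h
      simp only [hQdef]
      linear_combination -h
    set c₁ : ℂ := deriv u 0 / deriv ulam 0 with hc₁
    set c₂ : ℂ := deriv v 0 / deriv vlam 0 with hc₂
    have hd2 : (deriv fun x => c₁ * ulam x) = fun x => c₁ * deriv ulam x :=
      deriv_const_mul_field' _
    have hd3 : (deriv fun x => c₂ * vlam x) = fun x => c₂ * deriv vlam x :=
      deriv_const_mul_field' _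
    have hueq : ∀ x ∈ Icc a 0, u x = c₁ * ulam x := by
      apply uniq_from_right a 0 Q C hQ u (fun x => c₁ * ulam x) huD huD'
        (fun x hx => (hulD x hx).const_mul _)
        (fun x hx => by rw [hd2]; exact (hulD' x hx).const_mul _)
        huode
        (fun x hx => by
          rw [hd2, deriv_const_mul_field, hulode x hx]; ring)
        (by show u 0 = c₁ * ulam 0; rw [hu0, hul0, mul_zero])
        (by show deriv u 0 = (deriv fun x => c₁ * ulam x) 0
            rw [hd2]; exact (div_mul_cancel₀ _ hulam'0).symm)
    have hveq : ∀ x ∈ Icc 0 b, v x = c₂ * vlam x := by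
      apply uniq_from_left 0 b Q C hQ v (fun x => c₂ * vlam x) hvD hvD'
        (fun x hx => (hvlD x hx).const_mul _)
        (fun x hx => by rw [hd3]; exact (hvlD' x hx).const_mul _)
        hvode
        (fun x hx => by
          rw [hd3, deriv_const_mul_field, hvlode x hx]; ring)
        (by show v 0 = c₂ * vlam 0; rw [hv0, hvl0, mul_zero])
        (by show deriv v 0 = (deriv fun x => c₂ * vlam x) 0
            rw [hd3]; exact (div_mul_cancel₀ _ hvlam'0).symm)
    exact ⟨c₁, c₂, hueq, hwz, hveq⟩
  · -- no Jordan chains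
    rintro c₁ c₂ hne ⟨u, w, v, ⟨⟨huD, huD'⟩, hwreg, ⟨hvD, hvD'⟩, hubc, hw1, hw2, hvbc,
      hu0w, hv0w⟩, ⟨hmu, hmw, hmv⟩⟩
    have hwz : ∀ t ∈ Icc (-1:ℝ) 1, w t = 0 := by
      by_contra hcon
      push_neg at hcon
      obtain ⟨t, ht, hwt⟩ := hcon
      refine hB ⟨w, hwreg, fun s hs => ?_, hw1, hw2, t, ht, hwt⟩
      have h := hmw s hs
      simp only [ZeroF, mul_zero] at h
      linear_combination h
    have hu0 : u 0 = 0 := hu0w.trans (hwz (-1) ⟨le_refl _, by norm_num⟩)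
    have hv0 : v 0 = 0 := hv0w.trans (hwz 1 ⟨by norm_num, le_refl _⟩)
    have huode : ∀ x ∈ Icc a 0,
        deriv (deriv u) x = Q x * u x - c₁ * (r x : ℂ) * ulam x := by
      intro x hx
      have h := hmu x hx
      simp only [hQdef]
      linear_combination -h
    have hvode : ∀ x ∈ Icc 0 b,
        deriv (deriv v) x = Q x * v x - c₂ * (r x : ℂ) * vlam x := by
      intro x hx
      have h := hmv x hx
      simp only [hQdef]
      linear_combination -h
    have hc1 : c₁ = 0 := by
      apply kill a 0 ha r hrm m hm hrlow Mr hMr q lam hlamreal Q hQdef c₁ ulam u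
        hulD hulD' huD huD' hulode huode x₀ hx₀ hx₀ne
      · rw [hu0, hul0]; simp
      · exact bc_wronskian α (u a) (deriv u a) (star (ulam a)) (star (deriv ulam a))
          hubc (conj_bc α _ _ hulbc)
    have hc2 : c₂ = 0 := by
      apply kill 0 b hb r hrm m hm hrlow Mr hMr q lam hlamreal Q hQdef c₂ vlam v
        hvlD hvlD' hvD hvD' hvlode hvode y₀ hy₀ hy₀ne
      · exact bc_wronskian β (v b) (deriv v b) (star (vlam b)) (star (deriv vlam b))
          hvbc (conj_bc β _ _ hvlbc)
      · rw [hv0, hvl0]; simp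
    exact hne ⟨hc1, hc2⟩
end
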